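/- arXiv:math-ph/0305025 — 6 statements merged into one kernel-verified Lean document; each statement's English description precedes it below -/
import Mathlib

section
/- There exists a constant C > 0 such that for every integer n ≥ 1 and all ℓ > 0, g ≥ 0: E_N^{1D}(n,ℓ,g) ≥ (1/2)·(n(n−1)/ℓ)·g·(1 − C n (ℓg)^{1/2}). -/
open MeasureTheory Real Filter Set
open scoped ENNReal

noncomputable section

/-- The box `[0,ℓ]^n`. -/
def box (n : ℕ) (ℓ : ℝ) : Set (Fin n → ℝ) := Set.pi Set.univ (fun _ => Set.Icc 0 ℓ)

/-- The quadratic form of the Lieb-Liniger Hamiltonian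
`∑_j -∂_j² + g ∑_{i<j} δ(z_i - z_j)` on `[0,ℓ]^n`.  The delta interaction term
`∫ ψ² dσ_{ij}` (integral of `ψ²` over the hyperplane `{z_i = z_j} ∩ [0,ℓ]^n`) is
encoded as `ℓ⁻¹ ∫_{[0,ℓ]^n} ψ(z with z_j replaced by z_i)² dz`, which equals the
hyperplane integral since the integrand does not depend on `z_j`. -/
noncomputable def Q1D (n : ℕ) (ℓ g : ℝ) (ψ : (Fin n → ℝ) → ℝ) : ℝ :=
  (∑ j : Fin n, ∫ z in box n ℓ, (deriv (fun t => ψ (Function.update z j t)) (z j))^2)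
  + g * ∑ i : Fin n, ∑ j ∈ Finset.Ioi i, ℓ⁻¹ * ∫ z in box n ℓ, (ψ (Function.update z j (z i)))^2

/-- Admissible (normalized real C¹) wave functions on `[0,ℓ]^n`. -/
def adm1D (n : ℕ) (ℓ : ℝ) (ψ : (Fin n → ℝ) → ℝ) : Prop :=
  ContDiff ℝ 1 ψ ∧ (∫ z in box n ℓ, (ψ z)^2) = 1

/-- Neumann ground state energy `E_N^{1D}(n,ℓ,g)` of the Lieb-Liniger Hamiltonian. -/
noncomputable def E1DN (n : ℕ) (ℓ g : ℝ) : ℝ :=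
  sInf {E | ∃ ψ, adm1D n ℓ ψ ∧ Q1D n ℓ g ψ = E}

/-- Dirichlet ground state energy `E_D^{1D}(n,ℓ,g)` of the Lieb-Liniger Hamiltonian. -/
noncomputable def E1DD (n : ℕ) (ℓ g : ℝ) : ℝ :=
  sInf {E | ∃ ψ, adm1D n ℓ ψ ∧
    (∀ z ∈ box n ℓ, (∃ j, z j = 0 ∨ z j = ℓ) → ψ z = 0) ∧ Q1D n ℓ g ψ = E}

/-- Periodic ground state energy `E_p^{1D}(n,ℓ,g)` of the Lieb-Liniger Hamiltonian. -/
noncomputable def E1Dp (n : ℕ) (ℓ g : ℝ) : ℝ :=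
  sInf {E | ∃ ψ, adm1D n ℓ ψ ∧
    (∀ z j, ψ (Function.update z j (z j + ℓ)) = ψ z) ∧ Q1D n ℓ g ψ = E}

namespace Stmt13Aux

/-- The directional derivative `∂_j ψ`. -/
noncomputable def Dj {n : ℕ} (ψ : (Fin n → ℝ) → ℝ) (j : Fin n) (z : Fin n → ℝ) : ℝ :=
  fderiv ℝ ψ z (Pi.single j 1)

lemma hasDerivAt_update {n : ℕ} {ψ : (Fin n → ℝ) → ℝ} (hψ : ContDiff ℝ 1 ψ)
    (z : Fin n → ℝ) (j : Fin n) (t : ℝ) :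
    HasDerivAt (fun s => ψ (Function.update z j s)) (Dj ψ j (Function.update z j t)) t := by
  have hline : (fun s : ℝ => Function.update z j s)
      = fun s => (Function.update z j 0) + s • (Pi.single j 1 : Fin n → ℝ) := by
    funext s; funext k
    by_cases h : k = j
    · subst h; simp
    · simp [Function.update_apply, h, Pi.single_apply]
  have h1 : HasDerivAt (fun s : ℝ => Function.update z j s) (Pi.single j 1) t := by
    rw [hline]
    simpa using ((hasDerivAt_id t).smul_const (Pi.single j 1 : Fin n → ℝ)).const_add
      (Function.update z j 0)
  exact ((hψ.differentiable one_ne_zero (Function.update z j t)).hasFDerivAt).comp_hasDerivAt t h1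

lemma deriv_update_eq {n : ℕ} {ψ : (Fin n → ℝ) → ℝ} (hψ : ContDiff ℝ 1 ψ)
    (z : Fin n → ℝ) (j : Fin n) :
    deriv (fun t => ψ (Function.update z j t)) (z j) = Dj ψ j z := by
  have h := (hasDerivAt_update hψ z j (z j)).deriv
  rwa [Function.update_eq_self] at h

lemma continuous_Dj {n : ℕ} {ψ : (Fin n → ℝ) → ℝ} (hψ : ContDiff ℝ 1 ψ) (j : Fin n) :
    Continuous (Dj ψ j) :=
  (hψ.continuous_fderiv one_ne_zero).clm_apply continuous_const

lemma measurableSet_box {n : ℕ} {ℓ : ℝ} : MeasurableSet (box n ℓ) :=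
  MeasurableSet.univ_pi fun _ => measurableSet_Icc

lemma isCompact_box {n : ℕ} {ℓ : ℝ} : IsCompact (box n ℓ) :=
  isCompact_univ_pi fun _ => isCompact_Icc

lemma integrableOn_box {n : ℕ} {ℓ : ℝ} {f : (Fin n → ℝ) → ℝ} (hf : Continuous f) :
    MeasureTheory.IntegrableOn f (box n ℓ) :=
  hf.continuousOn.integrableOn_compact isCompact_box


/-- `M ψ j ℓ z = ∫_0^ℓ |∂_j ψ²|` along the `j`-th line through `z`. -/
noncomputable def Mf {n : ℕ} (ψ : (Fin n → ℝ) → ℝ) (j : Fin n) (ℓ : ℝ) (z : Fin n → ℝ) : ℝ :=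
  ∫ t in (0:ℝ)..ℓ, |2 * ψ (Function.update z j t) * Dj ψ j (Function.update z j t)|

lemma continuous_Mf {n : ℕ} {ψ : (Fin n → ℝ) → ℝ} (hψ : ContDiff ℝ 1 ψ) (j : Fin n) (ℓ : ℝ) :
    Continuous (Mf ψ j ℓ) := by
  apply intervalIntegral.continuous_parametric_intervalIntegral_of_continuous' (μ := volume)
    (f := fun z t => |2 * ψ (Function.update z j t) * Dj ψ j (Function.update z j t)|)
  have hu : Continuous (fun p : (Fin n → ℝ) × ℝ => Function.update p.1 j p.2) :=
    continuous_fst.update j continuous_snd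
  exact ((continuous_const.mul (hψ.continuous.comp hu)).mul
    ((continuous_Dj hψ j).comp hu)).abs

lemma key_pointwise {n : ℕ} {ψ : (Fin n → ℝ) → ℝ} (hψ : ContDiff ℝ 1 ψ) {ℓ : ℝ}
    (hℓ : 0 ≤ ℓ) (i j : Fin n) {z : Fin n → ℝ} (hz : z ∈ box n ℓ) :
    (ψ z)^2 - Mf ψ j ℓ z ≤ (ψ (Function.update z j (z i)))^2 := by
  have hzmem : ∀ k, z k ∈ Set.Icc (0:ℝ) ℓ := fun k => hz k (Set.mem_univ k)
  set G : ℝ → ℝ := fun t => 2 * ψ (Function.update z j t) * Dj ψ j (Function.update z j t)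
    with hGdef
  have hupd : Continuous (fun t : ℝ => Function.update z j t) :=
    continuous_const.update j continuous_id
  have hG : Continuous G :=
    (continuous_const.mul (hψ.continuous.comp hupd)).mul ((continuous_Dj hψ j).comp hupd)
  have hφ : ∀ t : ℝ, HasDerivAt (fun s => (ψ (Function.update z j s))^2) (G t) t := by
    intro t
    have h := (hasDerivAt_update hψ z j t).fun_pow 2
    refine h.congr_deriv ?_
    simp [hGdef]
  have heq : (ψ (Function.update z j (z i)))^2 - (ψ z)^2 = ∫ t in (z j)..(z i), G t := by
    rw [intervalIntegral.integral_eq_sub_of_hasDerivAt (fun t _ => hφ t)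
      (hG.intervalIntegrable _ _)]
    simp [Function.update_eq_self]
  have habs : |∫ t in (z j)..(z i), G t| ≤ Mf ψ j ℓ z := by
    have h0 : |∫ t in (z j)..(z i), G t| ≤ ∫ t in Set.uIoc (z j) (z i), |G t| := by
      simpa [Real.norm_eq_abs] using
        (intervalIntegral.norm_integral_le_integral_norm_uIoc (f := G) (a := z j) (b := z i)
          (μ := volume))
    have h1 : ∫ t in Set.uIoc (z j) (z i), |G t| ≤ ∫ t in Set.Ioc (0:ℝ) ℓ, |G t| := by
      apply MeasureTheory.setIntegral_mono_set
      · exact (hG.abs.integrableOn_Icc).mono_set Set.Ioc_subset_Icc_self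
      · exact MeasureTheory.ae_restrict_of_forall_mem measurableSet_Ioc
          (fun t _ => abs_nonneg _)
      · refine HasSubset.Subset.eventuallyLE ?_
        rw [Set.uIoc]
        exact Set.Ioc_subset_Ioc (le_min (hzmem j).1 (hzmem i).1)
          (max_le (hzmem j).2 (hzmem i).2)
    have h2 : Mf ψ j ℓ z = ∫ t in Set.Ioc (0:ℝ) ℓ, |G t| := by
      rw [Mf, intervalIntegral.integral_of_le hℓ]
    linarith
  have := abs_le.1 habs
  linarith [heq]


lemma box_succ_preimage {m : ℕ} (j : Fin (m+1)) (ℓ : ℝ) :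
    box (m+1) ℓ
      = (MeasurableEquiv.piFinSuccAbove (fun _ : Fin (m+1) => ℝ) j) ⁻¹'
          ((Set.Icc (0:ℝ) ℓ) ×ˢ (box m ℓ)) := by
  ext z
  simp only [box, Set.mem_preimage, Set.mem_prod, Set.mem_univ_pi,
    MeasurableEquiv.piFinSuccAbove_apply, Fin.insertNthEquiv_symm_apply, Fin.removeNth]
  constructor
  · intro h; exact ⟨h j, fun k => h _⟩
  · rintro ⟨h1, h2⟩ k
    rcases eq_or_ne k j with rfl | hk
    · exact h1
    · obtain ⟨u, rfl⟩ := Fin.exists_succAbove_eq hk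
      exact h2 u

lemma myContinuous_insertNth {m : ℕ} (j : Fin (m+1)) :
    Continuous (fun p : ℝ × (Fin m → ℝ) => (j.insertNth p.1 p.2 : Fin (m+1) → ℝ)) :=
  Continuous.finInsertNth (A := fun _ => ℝ) j continuous_fst continuous_snd

lemma fubini_box {m : ℕ} (j : Fin (m+1)) {ℓ : ℝ} (hℓ : 0 < ℓ)
    {h : (Fin (m+1) → ℝ) → ℝ} (hh : Continuous h) :
    ∫ z in box (m+1) ℓ, (∫ t in (0:ℝ)..ℓ, h (Function.update z j t))
      = ℓ * ∫ z in box (m+1) ℓ, h z := by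
  set e := MeasurableEquiv.piFinSuccAbove (fun _ : Fin (m+1) => ℝ) j with he
  have hmp : MeasureTheory.MeasurePreserving e := volume_preserving_piFinSuccAbove _ j
  set S : Set (ℝ × (Fin m → ℝ)) := (Set.Icc (0:ℝ) ℓ) ×ˢ (box m ℓ) with hS
  have hScompact : IsCompact S := isCompact_Icc.prod isCompact_box
  set K : (Fin m → ℝ) → ℝ := fun y => ∫ t in (0:ℝ)..ℓ, h (j.insertNth t y) with hK
  have hKcont : Continuous K := by
    apply intervalIntegral.continuous_parametric_intervalIntegral_of_continuous' (μ := volume)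
      (f := fun y t => h (j.insertNth t y))
    exact hh.comp ((myContinuous_insertNth j).comp (continuous_snd.prodMk continuous_fst))
  have hins : Continuous (fun p : ℝ × (Fin m → ℝ) => h (j.insertNth p.1 p.2)) :=
    hh.comp (myContinuous_insertNth j)
  -- left side
  have step1 : ∫ z in box (m+1) ℓ, (∫ t in (0:ℝ)..ℓ, h (Function.update z j t))
      = ∫ p in S, K p.2 := by
    rw [box_succ_preimage j ℓ, ← hS, ← he,
      ← hmp.setIntegral_preimage_emb e.measurableEmbedding (fun p => K p.2) S]
    apply MeasureTheory.integral_congr_ae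
    apply Filter.Eventually.of_forall
    intro z
    simp only [he, MeasurableEquiv.piFinSuccAbove_apply, Fin.insertNthEquiv_symm_apply, hK]
    congr 1
    funext t
    rw [Fin.insertNth_removeNth]
  have step2 : ∫ p in S, K p.2 = ℓ * ∫ y in box m ℓ, K y := by
    rw [MeasureTheory.Measure.volume_eq_prod, MeasureTheory.setIntegral_prod]
    · have hconst : ∫ x in Set.Icc (0:ℝ) ℓ, (∫ y in box m ℓ, K y)
          = ℓ * ∫ y in box m ℓ, K y := by
        rw [MeasureTheory.setIntegral_const]
        simp [Real.volume_Icc, ENNReal.toReal_ofReal hℓ.le, hℓ.le]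
      exact hconst
    · rw [← MeasureTheory.Measure.volume_eq_prod]
      exact (hKcont.comp continuous_snd).continuousOn.integrableOn_compact hScompact
  -- right side
  have step3 : ∫ z in box (m+1) ℓ, h z = ∫ p in S, h (j.insertNth p.1 p.2) := by
    rw [box_succ_preimage j ℓ, ← hS, ← he,
      ← hmp.setIntegral_preimage_emb e.measurableEmbedding (fun p => h (j.insertNth p.1 p.2)) S]
    apply MeasureTheory.integral_congr_ae
    apply Filter.Eventually.of_forall
    intro z
    simp only [he, MeasurableEquiv.piFinSuccAbove_apply, Fin.insertNthEquiv_symm_apply]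
    rw [Fin.insertNth_self_removeNth]
  have hswap : MeasureTheory.MeasurePreserving
      (Prod.swap : (Fin m → ℝ) × ℝ → ℝ × (Fin m → ℝ)) volume volume := by
    rw [MeasureTheory.Measure.volume_eq_prod (Fin m → ℝ) ℝ,
      MeasureTheory.Measure.volume_eq_prod ℝ (Fin m → ℝ)]
    exact MeasureTheory.Measure.measurePreserving_swap
  have step4 : ∫ p in S, h (j.insertNth p.1 p.2)
      = ∫ q in (box m ℓ) ×ˢ (Set.Icc (0:ℝ) ℓ), h (j.insertNth q.2 q.1) := by
    rw [← hswap.setIntegral_preimage_emb MeasurableEquiv.prodComm.measurableEmbedding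
      (fun p => h (j.insertNth p.1 p.2)) S]
    rw [hS, Set.preimage_swap_prod]
    rfl
  have step5 : ∫ q in (box m ℓ) ×ˢ (Set.Icc (0:ℝ) ℓ), h (j.insertNth q.2 q.1)
      = ∫ y in box m ℓ, K y := by
    rw [MeasureTheory.Measure.volume_eq_prod, MeasureTheory.setIntegral_prod]
    · apply MeasureTheory.integral_congr_ae
      apply Filter.Eventually.of_forall
      intro y
      simp only [hK]
      rw [intervalIntegral.integral_of_le hℓ.le, ← MeasureTheory.integral_Icc_eq_integral_Ioc]
    · rw [← MeasureTheory.Measure.volume_eq_prod]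
      exact (hins.comp (continuous_snd.prodMk continuous_fst)).continuousOn.integrableOn_compact
        (isCompact_box.prod isCompact_Icc)
  rw [step1, step2, step3, step4, step5]


lemma Q_nonneg {n : ℕ} {ℓ g : ℝ} (hg : 0 ≤ g) (hℓ : 0 < ℓ) (ψ : (Fin n → ℝ) → ℝ) :
    0 ≤ Q1D n ℓ g ψ := by
  unfold Q1D
  apply add_nonneg
  · apply Finset.sum_nonneg; intro j _
    exact MeasureTheory.setIntegral_nonneg measurableSet_box fun z _ => sq_nonneg _
  · apply mul_nonneg hg
    apply Finset.sum_nonneg; intro i _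
    apply Finset.sum_nonneg; intro j _
    exact mul_nonneg (inv_nonneg.2 hℓ.le)
      (MeasureTheory.setIntegral_nonneg measurableSet_box fun z _ => sq_nonneg _)

lemma interaction_lower {m : ℕ} {ℓ g : ℝ} (hℓ : 0 < ℓ) (hg : 0 < g)
    {ψ : (Fin (m+1) → ℝ) → ℝ} (h1 : ContDiff ℝ 1 ψ)
    (h2 : (∫ z in box (m+1) ℓ, (ψ z)^2) = 1) (i j : Fin (m+1)) :
    ℓ⁻¹ - g * ((m:ℝ)+1) - (g * ((m:ℝ)+1))⁻¹ * (∫ z in box (m+1) ℓ, (Dj ψ j z)^2)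
      ≤ ℓ⁻¹ * ∫ z in box (m+1) ℓ, (ψ (Function.update z j (z i)))^2 := by
  set a : ℝ := g * ((m:ℝ)+1) with ha
  have hapos : 0 < a := by positivity
  set T : ℝ := ∫ z in box (m+1) ℓ, (Dj ψ j z)^2 with hT
  have hupd2 : Continuous fun z : Fin (m+1) → ℝ => (ψ (Function.update z j (z i)))^2 := by
    have hcu : Continuous fun z : Fin (m+1) → ℝ => Function.update z j (z i) :=
      continuous_id.update j (continuous_apply i)
    exact (h1.continuous.comp hcu).pow 2
  have hMcont := continuous_Mf h1 j ℓ
  have hstep1 : (∫ z in box (m+1) ℓ, ((ψ z)^2 - Mf ψ j ℓ z))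
      ≤ ∫ z in box (m+1) ℓ, (ψ (Function.update z j (z i)))^2 := by
    apply MeasureTheory.setIntegral_mono_on
    · exact integrableOn_box ((h1.continuous.pow 2).sub hMcont)
    · exact integrableOn_box hupd2
    · exact measurableSet_box
    · intro z hz; exact key_pointwise h1 hℓ.le i j hz
  have hsplit : (∫ z in box (m+1) ℓ, ((ψ z)^2 - Mf ψ j ℓ z))
      = 1 - ∫ z in box (m+1) ℓ, Mf ψ j ℓ z := by
    rw [MeasureTheory.integral_sub (integrableOn_box (f := fun z => (ψ z)^2) (h1.continuous.pow 2))
      (integrableOn_box hMcont), h2]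
  have habs_cont : Continuous fun z : Fin (m+1) → ℝ => |2 * ψ z * Dj ψ j z| :=
    ((continuous_const.mul h1.continuous).mul (continuous_Dj h1 j)).abs
  have hfub : (∫ z in box (m+1) ℓ, Mf ψ j ℓ z)
      = ℓ * ∫ z in box (m+1) ℓ, |2 * ψ z * Dj ψ j z| :=
    fubini_box j hℓ habs_cont
  have hcs : (∫ z in box (m+1) ℓ, |2 * ψ z * Dj ψ j z|) ≤ a + a⁻¹ * T := by
    have haa : a * a⁻¹ = 1 := mul_inv_cancel₀ hapos.ne'
    have hpt : ∀ z, |2 * ψ z * Dj ψ j z| ≤ a * (ψ z)^2 + a⁻¹ * (Dj ψ j z)^2 := by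
      intro z
      rw [abs_mul, abs_mul]
      have h2' : |(2:ℝ)| = 2 := by norm_num
      rw [h2']
      set t := |ψ z| with htdef
      set s := |Dj ψ j z| with hsdef
      have h0 : 0 ≤ a⁻¹ * (a*t - s)^2 := mul_nonneg (inv_nonneg.2 hapos.le) (sq_nonneg _)
      have hexp : a⁻¹ * (a*t - s)^2 = (a*a⁻¹)*(a*t^2) - (a*a⁻¹)*(2*t*s) + a⁻¹*s^2 := by ring
      rw [haa, one_mul, one_mul] at hexp
      have hts : 2*t*s ≤ a*t^2 + a⁻¹*s^2 := by linarith
      have hψ2 : (ψ z)^2 = t^2 := (sq_abs _).symm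
      have hD2 : (Dj ψ j z)^2 = s^2 := (sq_abs _).symm
      rw [hψ2, hD2]
      linarith
    have hmono : (∫ z in box (m+1) ℓ, |2 * ψ z * Dj ψ j z|)
        ≤ ∫ z in box (m+1) ℓ, (a * (ψ z)^2 + a⁻¹ * (Dj ψ j z)^2) := by
      apply MeasureTheory.setIntegral_mono_on
      · exact integrableOn_box habs_cont
      · exact integrableOn_box ((continuous_const.mul (h1.continuous.pow 2)).add
          (continuous_const.mul ((continuous_Dj h1 j).pow 2)))
      · exact measurableSet_box
      · intro z _; exact hpt z
    have hsplit2 : (∫ z in box (m+1) ℓ, (a * (ψ z)^2 + a⁻¹ * (Dj ψ j z)^2))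
        = a + a⁻¹ * T := by
      rw [MeasureTheory.integral_add (((integrableOn_box (f := fun z => (ψ z)^2) (h1.continuous.pow 2))).const_mul a)
        ((integrableOn_box (f := fun z => (Dj ψ j z)^2) ((continuous_Dj h1 j).pow 2)).const_mul a⁻¹),
        MeasureTheory.integral_const_mul, MeasureTheory.integral_const_mul, h2, ← hT, mul_one]
    linarith
  have hR : 1 - ℓ * (a + a⁻¹ * T) ≤ ∫ z in box (m+1) ℓ, (ψ (Function.update z j (z i)))^2 := by
    rw [hsplit] at hstep1
    have h3 : (∫ z in box (m+1) ℓ, Mf ψ j ℓ z) ≤ ℓ * (a + a⁻¹ * T) := by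
      rw [hfub]; exact mul_le_mul_of_nonneg_left hcs hℓ.le
    linarith
  have hmul := mul_le_mul_of_nonneg_left hR (inv_nonneg.2 hℓ.le)
  have hkey : ℓ⁻¹ * (1 - ℓ * (a + a⁻¹ * T)) = ℓ⁻¹ - a - a⁻¹ * T := by
    field_simp
    ring
  linarith

lemma gauss_sum (m : ℕ) : ∑ j : Fin (m+1), ((j : ℕ) : ℝ) = ((m:ℝ)+1) * m / 2 := by
  rw [Fin.sum_univ_eq_sum_range (fun i => (i : ℝ)) (m+1)]
  have h := Finset.sum_range_id_mul_two (m+1)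
  have h' : ((∑ i ∈ Finset.range (m+1), i : ℕ) : ℝ) * 2 = ((m+1) * m : ℕ) := by
    exact_mod_cast congrArg (Nat.cast (R := ℝ)) h
  push_cast at h'
  linarith

lemma Q_lower {m : ℕ} {ℓ g : ℝ} (hℓ : 0 < ℓ) (hg : 0 < g)
    {ψ : (Fin (m+1) → ℝ) → ℝ} (h1 : ContDiff ℝ 1 ψ)
    (h2 : (∫ z in box (m+1) ℓ, (ψ z)^2) = 1) :
    g * (ℓ⁻¹ - g * ((m:ℝ)+1)) * (((m:ℝ)+1) * m / 2) ≤ Q1D (m+1) ℓ g ψ := by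
  set a : ℝ := g * ((m:ℝ)+1) with ha
  have hapos : 0 < a := by positivity
  set T : Fin (m+1) → ℝ := fun j => ∫ z in box (m+1) ℓ, (Dj ψ j z)^2 with hT
  have hTnn : ∀ j, 0 ≤ T j := fun j =>
    MeasureTheory.setIntegral_nonneg measurableSet_box fun z _ => sq_nonneg _
  set A : ℝ := ∑ j : Fin (m+1), T j with hA
  set B : ℝ := ∑ j : Fin (m+1), ((j:ℕ):ℝ) * T j with hB
  have hkin : (∑ j : Fin (m+1), ∫ z in box (m+1) ℓ,
      (deriv (fun t => ψ (Function.update z j t)) (z j))^2) = A := by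
    apply Finset.sum_congr rfl
    intro j _
    apply MeasureTheory.integral_congr_ae
    apply Filter.Eventually.of_forall
    intro z
    show deriv (fun t => ψ (Function.update z j t)) (z j) ^ 2 = Dj ψ j z ^ 2
    rw [deriv_update_eq h1 z j]
  set Sint : ℝ := ∑ i : Fin (m+1), ∑ j ∈ Finset.Ioi i,
      ℓ⁻¹ * ∫ z in box (m+1) ℓ, (ψ (Function.update z j (z i)))^2 with hSint
  have hQ : Q1D (m+1) ℓ g ψ = A + g * Sint := by
    rw [Q1D, hkin]
  have hSlb : ∑ i : Fin (m+1), ∑ j ∈ Finset.Ioi i, (ℓ⁻¹ - a - a⁻¹ * T j) ≤ Sint := by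
    apply Finset.sum_le_sum
    intro i _
    apply Finset.sum_le_sum
    intro j _
    exact interaction_lower hℓ hg h1 h2 i j
  have hswap : ∑ i : Fin (m+1), ∑ j ∈ Finset.Ioi i, (ℓ⁻¹ - a - a⁻¹ * T j)
      = ∑ j : Fin (m+1), ((j:ℕ):ℝ) * (ℓ⁻¹ - a - a⁻¹ * T j) := by
    rw [Finset.sum_comm' (s' := fun j => Finset.Iio j) (t' := Finset.univ)
      (by intro x y; simp [Finset.mem_Ioi, Finset.mem_Iio])]
    apply Finset.sum_congr rfl
    intro j _
    rw [Finset.sum_const, Fin.card_Iio, nsmul_eq_mul]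
  have hL : ∑ j : Fin (m+1), ((j:ℕ):ℝ) * (ℓ⁻¹ - a - a⁻¹ * T j)
      = (ℓ⁻¹ - a) * (((m:ℝ)+1) * m / 2) - a⁻¹ * B := by
    have hterm : ∀ j : Fin (m+1), ((j:ℕ):ℝ) * (ℓ⁻¹ - a - a⁻¹ * T j)
        = (ℓ⁻¹ - a) * ((j:ℕ):ℝ) - a⁻¹ * (((j:ℕ):ℝ) * T j) := by intro j; ring
    rw [Finset.sum_congr rfl (fun j _ => hterm j), Finset.sum_sub_distrib,
      ← Finset.mul_sum, ← Finset.mul_sum, gauss_sum]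
  have hBA : B ≤ ((m:ℝ)+1) * A := by
    rw [hB, hA, Finset.mul_sum]
    apply Finset.sum_le_sum
    intro j _
    apply mul_le_mul_of_nonneg_right _ (hTnn j)
    have hj : ((j:ℕ):ℝ) < (m:ℝ)+1 := by exact_mod_cast j.isLt
    linarith
  have hga : g * a⁻¹ * ((m:ℝ)+1) = 1 := by rw [ha]; field_simp
  have h5 : g * (a⁻¹ * B) ≤ A := by
    have h6 : a⁻¹ * B ≤ a⁻¹ * (((m:ℝ)+1) * A) :=
      mul_le_mul_of_nonneg_left hBA (inv_nonneg.2 hapos.le)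
    have h7 : g * (a⁻¹ * B) ≤ g * (a⁻¹ * (((m:ℝ)+1) * A)) :=
      mul_le_mul_of_nonneg_left h6 hg.le
    have h8 : g * (a⁻¹ * (((m:ℝ)+1) * A)) = (g * a⁻¹ * ((m:ℝ)+1)) * A := by ring
    rw [h8, hga, one_mul] at h7
    exact h7
  have hgS : g * (∑ i : Fin (m+1), ∑ j ∈ Finset.Ioi i, (ℓ⁻¹ - a - a⁻¹ * T j)) ≤ g * Sint :=
    mul_le_mul_of_nonneg_left hSlb hg.le
  rw [hswap, hL] at hgS
  have hexp : g * ((ℓ⁻¹ - a) * (((m:ℝ)+1)*m/2) - a⁻¹ * B)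
      = g * (ℓ⁻¹ - a) * (((m:ℝ)+1)*m/2) - g * (a⁻¹ * B) := by ring
  rw [hexp] at hgS
  rw [hQ]
  linarith

lemma adm_exists {n : ℕ} {ℓ : ℝ} (hℓ : 0 < ℓ) :
    adm1D n ℓ (fun _ => (Real.sqrt (ℓ^n))⁻¹) := by
  refine ⟨contDiff_const, ?_⟩
  rw [MeasureTheory.setIntegral_const]
  have hvol : volume (box n ℓ) = ENNReal.ofReal ℓ ^ n := by
    rw [box, volume_pi_pi]
    simp [Real.volume_Icc]
  rw [measureReal_def, hvol, smul_eq_mul]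
  rw [ENNReal.toReal_pow, ENNReal.toReal_ofReal hℓ.le]
  rw [inv_pow, Real.sq_sqrt (pow_nonneg hℓ.le n),
    mul_inv_cancel₀ (pow_pos hℓ n).ne']

end Stmt13Aux

open Stmt13Aux in
/-- Lower bound for the Neumann Lieb-Liniger energy:
`E_N^{1D}(n,ℓ,g) ≥ (1/2)(n(n−1)/ℓ) g (1 − C n (ℓg)^{1/2})`. -/
theorem stmt13 :
    ∃ C : ℝ, 0 < C ∧ ∀ (n : ℕ), 1 ≤ n → ∀ ℓ g : ℝ, 0 < ℓ → 0 ≤ g →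
      (1/2) * ((n : ℝ) * ((n : ℝ) - 1) / ℓ) * g
          * (1 - C * (n : ℝ) * (ℓ * g) ^ ((1:ℝ)/2)) ≤ E1DN n ℓ g := by
  refine ⟨1, one_pos, ?_⟩
  intro n hn ℓ g hℓ hg
  obtain ⟨m, rfl⟩ : ∃ m, n = m + 1 := ⟨n - 1, (Nat.succ_pred_eq_of_pos hn).symm⟩
  have hlb : ∀ ψ : (Fin (m+1) → ℝ) → ℝ, adm1D (m+1) ℓ ψ →
      (1/2) * (((m+1 : ℕ) : ℝ) * (((m+1 : ℕ) : ℝ) - 1) / ℓ) * g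
        * (1 - 1 * ((m+1 : ℕ) : ℝ) * (ℓ * g) ^ ((1:ℝ)/2)) ≤ Q1D (m+1) ℓ g ψ := by
    rintro ψ ⟨h1, h2⟩
    have hMcast : ((m+1 : ℕ) : ℝ) = (m:ℝ) + 1 := by push_cast; ring
    rw [hMcast]
    set s : ℝ := (ℓ * g) ^ ((1:ℝ)/2) with hs
    have hsql : s = Real.sqrt (ℓ * g) := by rw [hs, Real.sqrt_eq_rpow]
    have hsnn : 0 ≤ s := by rw [hsql]; exact Real.sqrt_nonneg _
    have hm0 : (0:ℝ) ≤ (m:ℝ) := Nat.cast_nonneg m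
    have hpre : 0 ≤ (1/2) * (((m:ℝ)+1) * (((m:ℝ)+1) - 1) / ℓ) * g := by
      have hm1 : ((m:ℝ)+1) - 1 = (m:ℝ) := by ring
      rw [hm1]; positivity
    rcases le_or_gt (1 - 1 * ((m:ℝ)+1) * s) 0 with hcase | hcase
    · have hneg : (1/2) * (((m:ℝ)+1) * (((m:ℝ)+1) - 1) / ℓ) * g
          * (1 - 1 * ((m:ℝ)+1) * s) ≤ 0 := by
        nlinarith [mul_nonneg hpre (neg_nonneg.2 hcase)]
      exact hneg.trans (Q_nonneg hg hℓ ψ)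
    · rcases hg.eq_or_lt with heq | hgpos
      · rw [← heq]
        simpa using Q_nonneg le_rfl hℓ ψ
      · have hmain := Q_lower hℓ hgpos h1 h2
        have hs1 : s < 1 := by nlinarith [mul_nonneg hm0 hsnn]
        have hssq : s^2 = ℓ * g := by
          rw [hsql]; exact Real.sq_sqrt (by positivity)
        have hlg_le : ℓ * g ≤ s := by nlinarith
        have hrew : g * (ℓ⁻¹ - g * ((m:ℝ)+1)) * (((m:ℝ)+1) * m / 2)
            = (1/2) * (((m:ℝ)+1) * (((m:ℝ)+1) - 1) / ℓ) * g * (1 - ℓ * g * ((m:ℝ)+1)) := by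
          field_simp
          ring
        have hcomp : (1/2) * (((m:ℝ)+1) * (((m:ℝ)+1)-1) / ℓ) * g * (1 - 1*((m:ℝ)+1)*s)
            ≤ (1/2) * (((m:ℝ)+1) * (((m:ℝ)+1)-1) / ℓ) * g * (1 - ℓ*g*((m:ℝ)+1)) := by
          apply mul_le_mul_of_nonneg_left _ hpre
          nlinarith [hlg_le, hm0]
        rw [hrew] at hmain
        exact hcomp.trans hmain
  unfold E1DN
  apply le_csInf
  · exact ⟨Q1D (m+1) ℓ g (fun _ => (Real.sqrt (ℓ^(m+1)))⁻¹),
      (fun _ => (Real.sqrt (ℓ^(m+1)))⁻¹), adm_exists hℓ, rfl⟩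
  · rintro E ⟨ψ, hadm, rfl⟩
    exact hlb ψ hadm
end
end

section
/- Let λ > 1. Let K : [0,∞) → [0,∞) be nonincreasing and L : [0,∞) → [0,∞) be convex with L(0) = 0, whose right derivative L′ satisfies L′(x) ≤ L(λx)/(2λx) for all x > 0. Let E : ℕ∪{0} → [0,∞) be superadditive, i.e., E(n₁ + n₂) ≥ E(n₁) + E(n₂) for all n₁, n₂, and satisfy E(n) ≥ L(n)K(n) for all n. Let (c_n)_{n≥0} be nonnegative real numbers with Σ_{n≥0} c_n ≤ M and Σ_{n≥0} c_n·n = N, where M, N > 0. Then Σ_{n≥0} c_n E(n) ≥ M·L(N/M)·K(⌈λN/M⌉), where ⌈x⌉ denotes the smallest integer ≥ x. -/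
open MeasureTheory Real Set
open scoped ENNReal

/-- The box-counting lemma (Lemma 4 of Lieb–Seiringer–Yngvason): if `E` is a
superadditive sequence bounded below by `L(n)K(n)` with `K` nonincreasing and
`L` convex with `L(0)=0` and right derivative `L′(x) ≤ L(λx)/(2λx)`, and `c_n ≥ 0`
satisfy `∑ c_n ≤ M`, `∑ c_n n = N`, then `∑ c_n E(n) ≥ M L(N/M) K(⌈λN/M⌉)`.
(Sums are taken in `[0,∞]` so that no summability assumptions are needed.) -/
theorem stmt14 (lam : ℝ) (hlam : 1 < lam)
    (K L : ℝ → ℝ)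
    (hK0 : ∀ x, 0 ≤ x → 0 ≤ K x) (hKanti : AntitoneOn K (Set.Ici 0))
    (hL0 : ∀ x, 0 ≤ x → 0 ≤ L x) (hLconv : ConvexOn ℝ (Set.Ici 0) L) (hL00 : L 0 = 0)
    (hL' : ∀ x : ℝ, 0 < x → ∀ d : ℝ, HasDerivWithinAt L d (Set.Ici x) x →
      d ≤ L (lam * x) / (2 * lam * x))
    (E : ℕ → ℝ) (hE0 : ∀ n, 0 ≤ E n)
    (hEsuper : ∀ n₁ n₂ : ℕ, E n₁ + E n₂ ≤ E (n₁ + n₂))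
    (hELK : ∀ n : ℕ, L n * K n ≤ E n)
    (c : ℕ → ℝ) (hc0 : ∀ n, 0 ≤ c n)
    (M N : ℝ) (hM : 0 < M) (hN : 0 < N)
    (hcM : (∑' n : ℕ, ENNReal.ofReal (c n)) ≤ ENNReal.ofReal M)
    (hcN : (∑' n : ℕ, ENNReal.ofReal (c n * n)) = ENNReal.ofReal N) :
    ENNReal.ofReal (M * L (N / M) * K (Nat.ceil (lam * N / M))) ≤
      ∑' n : ℕ, ENNReal.ofReal (c n * E n) := by
  set ρ : ℝ := N / M with hρdef
  have hρ : 0 < ρ := div_pos hN hM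
  set p : ℕ := Nat.ceil (lam * N / M) with hpdef
  have hlam0 : (0:ℝ) < lam := by linarith
  have hlr : 0 < lam * ρ := mul_pos hlam0 hρ
  have hlamNM : lam * N / M = lam * ρ := by rw [hρdef, mul_div_assoc]
  have hpge : lam * ρ ≤ (p : ℝ) := by rw [← hlamNM, hpdef]; exact Nat.le_ceil _
  have hppos : (0:ℝ) < (p : ℝ) := lt_of_lt_of_le hlr hpge
  have hp0 : 0 < p := by exact_mod_cast hppos
  have hKp : 0 ≤ K p := hK0 _ hppos.le
  -- the slope function at ρ is monotone
  have hmono : MonotoneOn (slope L ρ) (Set.Ici 0 \ {ρ}) := hLconv.slope_mono hρ.le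
  have hsub : Set.Ioi ρ ⊆ Set.Ici 0 \ {ρ} := fun y hy =>
    ⟨le_of_lt (hρ.trans hy), ne_of_gt (Set.mem_Ioi.mp hy)⟩
  have h0mem : (0:ℝ) ∈ Set.Ici 0 \ {ρ} := ⟨Set.self_mem_Ici, by simpa using hρ.ne⟩
  have hbdd : BddBelow (slope L ρ '' Set.Ioi ρ) := by
    refine ⟨slope L ρ 0, ?_⟩
    rintro _ ⟨y, hy, rfl⟩
    exact hmono h0mem (hsub hy) (le_of_lt (hρ.trans hy))
  set d : ℝ := sInf (slope L ρ '' Set.Ioi ρ) with hddef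
  have hne : (slope L ρ '' Set.Ioi ρ).Nonempty := ⟨_, ⟨ρ + 1, by simp, rfl⟩⟩
  have htend : Filter.Tendsto (slope L ρ) (nhdsWithin ρ (Set.Ioi ρ)) (nhds d) :=
    MonotoneOn.tendsto_nhdsGT (hmono.mono hsub) hbdd
  have hderiv : HasDerivWithinAt L d (Set.Ici ρ) ρ := by
    rw [hasDerivWithinAt_iff_tendsto_slope, Set.Ici_sdiff_left]
    exact htend
  -- d is at most L(λρ)/(2λρ)
  have hdle : d ≤ L (lam * ρ) / (2 * lam * ρ) := hL' ρ hρ d hderiv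
  -- tangent line bound
  have htan : ∀ y : ℝ, 0 ≤ y → L ρ + d * (y - ρ) ≤ L y := by
    intro y hy
    rcases lt_trichotomy y ρ with h | h | h
    · have hmem : y ∈ Set.Ici 0 \ {ρ} := ⟨hy, ne_of_lt h⟩
      have hle : slope L ρ y ≤ d := by
        refine le_csInf hne ?_
        rintro _ ⟨z, hz, rfl⟩
        exact hmono hmem (hsub hz) (le_of_lt (h.trans hz))
      rw [slope_def_field] at hle
      have hyρ : y - ρ < 0 := by linarith
      have := (div_le_iff_of_neg hyρ).mp hle
      linarith
    · subst h; simp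
    · have hle : d ≤ slope L ρ y := csInf_le hbdd ⟨y, h, rfl⟩
      rw [slope_def_field] at hle
      have hyρ : 0 < y - ρ := by linarith
      have := (le_div_iff₀ hyρ).mp hle
      linarith
  have hLρd : L ρ ≤ d * ρ := by
    have := htan 0 (le_refl 0)
    rw [hL00] at this; linarith
  have hd0 : 0 ≤ d := by nlinarith [hL0 ρ hρ.le, hLρd, hρ]
  -- slope-from-zero monotonicity: L(λρ)/(λρ) ≤ L p / p
  have hslope0 : L (lam * ρ) / (lam * ρ) ≤ L p / (p : ℝ) := by
    have hmono0 : MonotoneOn (slope L 0) (Set.Ici 0 \ {0}) := hLconv.slope_mono Set.self_mem_Ici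
    have := hmono0 ⟨hlr.le, hlr.ne'⟩ ⟨hppos.le, hppos.ne'⟩ hpge
    simpa [slope_def_field, hL00] using this
  -- iterated superadditivity
  have hiter : ∀ q k : ℕ, (q : ℝ) * E p + E k ≤ E (q * p + k) := by
    intro q
    induction q with
    | zero => intro k; simp
    | succ q ih =>
      intro k
      have h1 := ih k
      have h2 := hEsuper p (q * p + k)
      have h3 : (q + 1) * p + k = p + (q * p + k) := by ring
      rw [h3]; push_cast; linarith
  -- key pointwise claim
  have hclaim : ∀ n : ℕ, K p * (L ρ + d * ((n : ℝ) - ρ)) ≤ E n := by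
    intro n
    rcases le_or_gt n p with hnp | hpn
    · have hncast : (n : ℝ) ≤ (p : ℝ) := by exact_mod_cast hnp
      have hKn : K p ≤ K n := hKanti (Set.mem_Ici.mpr n.cast_nonneg)
        (Set.mem_Ici.mpr hppos.le) hncast
      have ht := htan n n.cast_nonneg
      have hLn : 0 ≤ L n := hL0 n n.cast_nonneg
      calc K p * (L ρ + d * ((n : ℝ) - ρ)) ≤ K p * L n :=
            mul_le_mul_of_nonneg_left ht hKp
        _ ≤ K n * L n := mul_le_mul_of_nonneg_right hKn hLn
        _ = L n * K n := mul_comm _ _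
        _ ≤ E n := hELK n
    · -- p < n : use superadditivity
      set q : ℕ := n / p with hqdef
      have hq1 : 1 ≤ q := (Nat.one_le_div_iff hp0).mpr hpn.le
      have hm : q * p + n % p = n := by
        rw [hqdef, mul_comm]; exact Nat.div_add_mod n p
      have hEn : (q : ℝ) * E p ≤ E n := by
        have h1 := hiter q (n % p)
        rw [hm] at h1
        linarith [hE0 (n % p)]
      have hnlt : n < (q + 1) * p := by
        calc n = q * p + n % p := hm.symm
          _ < q * p + p := Nat.add_lt_add_left (Nat.mod_lt n hp0) _
          _ = (q + 1) * p := by ring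
      have hn2qp : (n : ℝ) ≤ 2 * q * (p : ℝ) := by
        have h1 : (n : ℝ) < ((q : ℝ) + 1) * p := by exact_mod_cast hnlt
        have h2 : (1 : ℝ) ≤ (q : ℝ) := by exact_mod_cast hq1
        nlinarith
      have hq0 : (0:ℝ) ≤ (q:ℝ) := Nat.cast_nonneg q
      have hEp : 0 ≤ E p := hE0 p
      -- chain of inequalities
      have step1 : K p * (L ρ + d * ((n : ℝ) - ρ)) ≤ K p * (d * n) := by
        have : L ρ + d * ((n : ℝ) - ρ) ≤ d * n := by nlinarith
        exact mul_le_mul_of_nonneg_left this hKp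
      have step2 : K p * (d * n) ≤ K p * (n : ℝ) * (L (lam * ρ) / (2 * lam * ρ)) := by
        have hKn0 : 0 ≤ K p * (n : ℝ) := mul_nonneg hKp n.cast_nonneg
        calc K p * (d * n) = K p * (n : ℝ) * d := by ring
          _ ≤ K p * (n : ℝ) * (L (lam * ρ) / (2 * lam * ρ)) :=
              mul_le_mul_of_nonneg_left hdle hKn0
      have step3 : K p * (n : ℝ) * (L (lam * ρ) / (2 * lam * ρ)) ≤
          (q : ℝ) * (L p * K p) := by
        have hKn0 : 0 ≤ K p * (n : ℝ) := mul_nonneg hKp n.cast_nonneg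
        have s1 : K p * (n : ℝ) * (L (lam * ρ) / (2 * lam * ρ)) ≤
            K p * (n : ℝ) * (L p / (p : ℝ) / 2) := by
          apply mul_le_mul_of_nonneg_left _ hKn0
          have : L (lam * ρ) / (2 * lam * ρ) = (L (lam * ρ) / (lam * ρ)) / 2 := by
            rw [div_div]; congr 1; ring
          rw [this]
          linarith [hslope0]
        have hLp0 : 0 ≤ L p := hL0 p hppos.le
        have s2 : K p * (n : ℝ) * (L p / (p : ℝ) / 2) ≤ (q : ℝ) * (L p * K p) := by
          rw [div_div, ← mul_div_assoc, div_le_iff₀ (by positivity : (0:ℝ) < (p:ℝ) * 2)]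
          nlinarith [mul_le_mul_of_nonneg_right hn2qp (mul_nonneg hKp hLp0)]
        linarith
      have step4 : (q : ℝ) * (L p * K p) ≤ (q : ℝ) * E p :=
        mul_le_mul_of_nonneg_left (hELK p) hq0
      linarith
  -- summation in ENNReal
  have hLρ0 : 0 ≤ L ρ := hL0 ρ hρ.le
  set A : ℝ := K p * (d * ρ - L ρ) with hAdef
  have hA0 : 0 ≤ A := mul_nonneg hKp (by linarith)
  have hpoint : ∀ n : ℕ, K p * d * (c n * n) ≤ c n * E n + c n * A := by
    intro n
    have h3 := mul_le_mul_of_nonneg_left (hclaim n) (hc0 n)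
    rw [hAdef]
    linarith
  have hKd0 : 0 ≤ K p * d := mul_nonneg hKp hd0
  have key : ENNReal.ofReal (K p * d) * ENNReal.ofReal N ≤
      (∑' n : ℕ, ENNReal.ofReal (c n * E n)) + ENNReal.ofReal (A * M) := by
    rw [← hcN, ← ENNReal.tsum_mul_left]
    have hterm : ∀ n : ℕ, ENNReal.ofReal (K p * d) * ENNReal.ofReal (c n * n) ≤
        ENNReal.ofReal (c n * E n) + ENNReal.ofReal (c n * A) := by
      intro n
      rw [← ENNReal.ofReal_mul hKd0,
        ← ENNReal.ofReal_add (mul_nonneg (hc0 n) (hE0 n)) (mul_nonneg (hc0 n) hA0)]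
      exact ENNReal.ofReal_le_ofReal (hpoint n)
    calc (∑' n : ℕ, ENNReal.ofReal (K p * d) * ENNReal.ofReal (c n * n))
        ≤ ∑' n : ℕ, (ENNReal.ofReal (c n * E n) + ENNReal.ofReal (c n * A)) :=
          ENNReal.tsum_le_tsum hterm
      _ = (∑' n : ℕ, ENNReal.ofReal (c n * E n)) + ∑' n : ℕ, ENNReal.ofReal (c n * A) :=
          ENNReal.tsum_add
      _ = (∑' n : ℕ, ENNReal.ofReal (c n * E n)) +
          (∑' n : ℕ, ENNReal.ofReal (c n)) * ENNReal.ofReal A := by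
          rw [← ENNReal.tsum_mul_right]
          congr 1
          exact tsum_congr fun n => (ENNReal.ofReal_mul (hc0 n)).symm ▸ rfl
      _ ≤ (∑' n : ℕ, ENNReal.ofReal (c n * E n)) + ENNReal.ofReal M * ENNReal.ofReal A :=
          add_le_add_right (mul_le_mul_left hcM _) _
      _ = (∑' n : ℕ, ENNReal.ofReal (c n * E n)) + ENNReal.ofReal (A * M) := by
          rw [← ENNReal.ofReal_mul hM.le, mul_comm]
  -- conclude
  have hMρ : ρ * M = N := div_mul_cancel₀ N hM.ne'
  rw [← ENNReal.add_le_add_iff_right (ENNReal.ofReal_ne_top (r := A * M))]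
  have heq : ENNReal.ofReal (M * L ρ * K p) + ENNReal.ofReal (A * M) =
      ENNReal.ofReal (K p * d) * ENNReal.ofReal N := by
    rw [← ENNReal.ofReal_mul hKd0,
      ← ENNReal.ofReal_add (mul_nonneg (mul_nonneg hM.le hLρ0) hKp) (mul_nonneg hA0 hM.le)]
    congr 1
    rw [hAdef, ← hMρ]; ring
  rw [heq]
  exact key
end

section
/- Let ℓ > 0, z₀ ∈ (0,ℓ), and let α, A, B > 0 be such that R := B·arctan(BA/(2α)) ≤ min{z₀, ℓ − z₀}. Then for every C¹ function f on [0,ℓ]: α∫₀^ℓ f′(z)² dz + A·f(z₀)² ≥ (α/B²)∫_{z₀−R}^{z₀+R} f(z)² dz. -/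
open MeasureTheory Real Set intervalIntegral

lemma stmt16_core (α A B : ℝ) (hα : 0 < α) (hA : 0 < A) (hB : 0 < B)
    (u : ℝ → ℝ) (hu : ContDiff ℝ 1 u) :
    1 / B ^ 2 * ∫ z in (0:ℝ)..(B * Real.arctan (B * A / (2 * α))), u z ^ 2 ≤
      (∫ z in (0:ℝ)..(B * Real.arctan (B * A / (2 * α))), (deriv u z) ^ 2)
        + A / (2 * α) * u 0 ^ 2 := by
  set t : ℝ := B * A / (2 * α) with ht_def
  have ht : 0 < t := by positivity
  set R : ℝ := B * Real.arctan t with hR_def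
  have hat : 0 < Real.arctan t := by
    rw [← Real.arctan_zero]; exact Real.arctan_strictMono ht
  have hR0 : 0 ≤ R := by positivity
  set θ : ℝ → ℝ := fun z => (R - z) / B with hθ_def
  set h : ℝ → ℝ := fun z => Real.tan (θ z) / B with hh_def
  have hIcc : Set.uIcc (0:ℝ) R = Set.Icc 0 R := Set.uIcc_of_le hR0
  have hcos : ∀ x ∈ Set.uIcc (0:ℝ) R, 0 < Real.cos (θ x) := by
    intro x hx
    rw [hIcc] at hx
    apply Real.cos_pos_of_mem_Ioo
    constructor
    · have h1 : 0 ≤ (R - x) / B := by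
        apply div_nonneg _ hB.le; linarith [hx.2]
      have := Real.pi_pos
      calc -(π/2) < 0 := by linarith
        _ ≤ θ x := h1
    · have h2 : θ x ≤ Real.arctan t := by
        rw [hθ_def]
        rw [div_le_iff₀ hB]
        have : R - x ≤ R := by linarith [hx.1]
        calc R - x ≤ R := this
          _ = Real.arctan t * B := by rw [hR_def]; ring
      exact lt_of_le_of_lt h2 (Real.arctan_lt_pi_div_two t)
  have hθd : ∀ x : ℝ, HasDerivAt θ (-1 / B) x := by
    intro x
    have : HasDerivAt (fun z : ℝ => R - z) (-1) x := by
      simpa using ((hasDerivAt_id x).const_sub R)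
    simpa using this.div_const B
  have hhd : ∀ x ∈ Set.uIcc (0:ℝ) R, HasDerivAt h (-(1 / B ^ 2) - h x ^ 2) x := by
    intro x hx
    have hc := (hcos x hx).ne'
    have h1 : HasDerivAt Real.tan (1 / Real.cos (θ x) ^ 2) (θ x) :=
      Real.hasDerivAt_tan hc
    have h2 : HasDerivAt (fun z => Real.tan (θ z)) (1 / Real.cos (θ x) ^ 2 * (-1 / B)) x :=
      h1.comp x (hθd x)
    have h3 := h2.div_const B
    refine h3.congr_deriv ?_
    have h4 : (1 : ℝ) / Real.cos (θ x) ^ 2 = 1 + Real.tan (θ x) ^ 2 := by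
      rw [one_div, ← Real.inv_one_add_tan_sq hc, inv_inv]
    rw [h4, hh_def]
    field_simp
    ring
  have hud : ∀ x : ℝ, HasDerivAt u (deriv u x) x := fun x =>
    (hu.differentiable one_ne_zero x).hasDerivAt
  set G : ℝ → ℝ := fun z => (-(1 / B ^ 2) - h z ^ 2) * u z ^ 2
      + h z * (2 * u z * deriv u z) with hG_def
  have hFd : ∀ x ∈ Set.uIcc (0:ℝ) R, HasDerivAt (fun z => h z * u z ^ 2) (G x) x := by
    intro x hx
    have h1 : HasDerivAt (fun z => u z ^ 2) (2 * u x * deriv u x) x := by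
      simpa [pow_one, mul_comm, mul_assoc] using (hud x).fun_pow 2
    exact (hhd x hx).mul h1
  have hcu : Continuous u := hu.continuous
  have hcu' : Continuous (deriv u) := hu.continuous_deriv le_rfl
  have hch : ContinuousOn h (Set.uIcc (0:ℝ) R) := fun x hx =>
    (hhd x hx).continuousAt.continuousWithinAt
  have hGint : IntervalIntegrable G volume 0 R := by
    apply ContinuousOn.intervalIntegrable
    exact ((continuousOn_const.sub (hch.pow 2)).mul ((hcu.continuousOn).pow 2)).add
      (hch.mul (((continuous_const.mul hcu).mul hcu').continuousOn))
  have hu2int : IntervalIntegrable (fun z => u z ^ 2) volume 0 R :=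
    (hcu.pow 2).intervalIntegrable 0 R
  have hdu2int : IntervalIntegrable (fun z => (deriv u z) ^ 2) volume 0 R :=
    (hcu'.pow 2).intervalIntegrable 0 R
  have hFTC : ∫ z in (0:ℝ)..R, G z =
      h R * u R ^ 2 - h 0 * u 0 ^ 2 :=
    integral_eq_sub_of_hasDerivAt hFd hGint
  have hhR : h R = 0 := by
    simp [hh_def, hθ_def]
  have hh0 : h 0 = A / (2 * α) := by
    have hRB : R / B = Real.arctan t := by
      rw [hR_def, mul_comm, mul_div_assoc, div_self hB.ne', mul_one]
    rw [hh_def]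
    simp only [hθ_def, sub_zero]
    rw [hRB, Real.tan_arctan, ht_def]
    field_simp
  have hident : ∀ z : ℝ, (deriv u z - h z * u z) ^ 2
      = (deriv u z) ^ 2 - 1 / B ^ 2 * u z ^ 2 - G z := by
    intro z
    rw [hG_def]
    ring
  have hnonneg : 0 ≤ ∫ z in (0:ℝ)..R, (deriv u z - h z * u z) ^ 2 :=
    intervalIntegral.integral_nonneg hR0 (fun x _ => sq_nonneg _)
  have hsplit : ∫ z in (0:ℝ)..R, (deriv u z - h z * u z) ^ 2
      = (∫ z in (0:ℝ)..R, (deriv u z) ^ 2) - 1 / B ^ 2 * (∫ z in (0:ℝ)..R, u z ^ 2)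
        - ∫ z in (0:ℝ)..R, G z := by
    rw [intervalIntegral.integral_congr (g := fun z =>
      (deriv u z) ^ 2 - 1 / B ^ 2 * u z ^ 2 - G z) (fun z _ => hident z)]
    rw [intervalIntegral.integral_sub (hdu2int.sub (hu2int.const_mul _)) hGint,
      intervalIntegral.integral_sub hdu2int (hu2int.const_mul _),
      intervalIntegral.integral_const_mul]
  rw [hsplit, hFTC, hhR, hh0] at hnonneg
  linarith [hnonneg]

/-- Operator inequality `-α∂_z² + Aδ(z-z₀) - (α/B²)θ(R-|z-z₀|) ≥ 0` on `[0,ℓ]`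
(Neumann), stated as an inequality of quadratic forms on C¹ functions. -/
theorem stmt16 (ℓ z₀ α A B R : ℝ) (hℓ : 0 < ℓ) (hz₀ : z₀ ∈ Set.Ioo 0 ℓ)
    (hα : 0 < α) (hA : 0 < A) (hB : 0 < B)
    (hR : R = B * Real.arctan (B * A / (2 * α)))
    (hRle : R ≤ min z₀ (ℓ - z₀))
    (f : ℝ → ℝ) (hf : ContDiff ℝ 1 f) :
    α / B ^ 2 * ∫ z in (z₀ - R)..(z₀ + R), (f z) ^ 2 ≤
      α * (∫ z in (0:ℝ)..ℓ, (deriv f z) ^ 2) + A * (f z₀) ^ 2 := by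
  have hat : 0 < Real.arctan (B * A / (2 * α)) := by
    rw [← Real.arctan_zero]
    exact Real.arctan_strictMono (by positivity)
  have hR0 : 0 ≤ R := by rw [hR]; positivity
  have hz₀l : 0 ≤ z₀ - R := by
    have := le_min_iff.mp hRle; linarith [this.1]
  have hz₀r : z₀ + R ≤ ℓ := by
    have := le_min_iff.mp hRle; linarith [this.2]
  have hcf : Continuous f := hf.continuous
  have hcf' : Continuous (deriv f) := hf.continuous_deriv le_rfl
  -- the two shifted functions
  set uP : ℝ → ℝ := fun z => f (z₀ + z) with hup_def
  set uM : ℝ → ℝ := fun z => f (z₀ - z) with hum_def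
  have huP : ContDiff ℝ 1 uP := hf.comp (contDiff_const.add contDiff_id)
  have huM : ContDiff ℝ 1 uM := hf.comp (contDiff_const.sub contDiff_id)
  have hdP : ∀ z : ℝ, deriv uP z = deriv f (z₀ + z) := by
    intro z
    have h1 : HasDerivAt uP (deriv f (z₀ + z) * 1) z :=
      ((hf.differentiable one_ne_zero (z₀ + z)).hasDerivAt).comp z
        ((hasDerivAt_id z).const_add z₀)
    simpa using h1.deriv
  have hdM : ∀ z : ℝ, deriv uM z = deriv f (z₀ - z) * (-1) := by
    intro z
    have h1 : HasDerivAt uM (deriv f (z₀ - z) * (-1)) z :=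
      ((hf.differentiable one_ne_zero (z₀ - z)).hasDerivAt).comp z
        (by simpa using (hasDerivAt_id z).const_sub z₀)
    exact h1.deriv
  have cP := stmt16_core α A B hα hA hB uP huP
  have cM := stmt16_core α A B hα hA hB uM huM
  rw [← hR] at cP cM
  have hu0 : uP 0 = f z₀ := by simp [hup_def]
  have hu0' : uM 0 = f z₀ := by simp [hum_def]
  rw [hu0] at cP
  rw [hu0'] at cM
  -- rewrite the integrals via change of variables
  have e1 : (∫ z in (0:ℝ)..R, uP z ^ 2) = ∫ z in z₀..(z₀ + R), f z ^ 2 := by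
    have := intervalIntegral.integral_comp_add_left (a := (0:ℝ)) (b := R)
      (fun y => f y ^ 2) z₀
    simpa using this
  have e2 : (∫ z in (0:ℝ)..R, uM z ^ 2) = ∫ z in (z₀ - R)..z₀, f z ^ 2 := by
    have := intervalIntegral.integral_comp_sub_left (a := (0:ℝ)) (b := R)
      (fun y => f y ^ 2) z₀
    simpa using this
  have e3 : (∫ z in (0:ℝ)..R, (deriv uP z) ^ 2)
      = ∫ z in z₀..(z₀ + R), (deriv f z) ^ 2 := by
    rw [intervalIntegral.integral_congr (g := fun z => (deriv f (z₀ + z)) ^ 2)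
      (fun z _ => by rw [hdP z])]
    have := intervalIntegral.integral_comp_add_left (a := (0:ℝ)) (b := R)
      (fun y => (deriv f y) ^ 2) z₀
    simpa using this
  have e4 : (∫ z in (0:ℝ)..R, (deriv uM z) ^ 2)
      = ∫ z in (z₀ - R)..z₀, (deriv f z) ^ 2 := by
    rw [intervalIntegral.integral_congr (g := fun z => (deriv f (z₀ - z)) ^ 2)
      (fun z _ => by rw [hdM z]; ring)]
    have := intervalIntegral.integral_comp_sub_left (a := (0:ℝ)) (b := R)
      (fun y => (deriv f y) ^ 2) z₀
    simpa using this
  rw [e1, e3] at cP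
  rw [e2, e4] at cM
  -- combine adjacent intervals
  have hadd1 : (∫ z in (z₀ - R)..z₀, f z ^ 2) + (∫ z in z₀..(z₀ + R), f z ^ 2)
      = ∫ z in (z₀ - R)..(z₀ + R), f z ^ 2 :=
    intervalIntegral.integral_add_adjacent_intervals
      ((hcf.pow 2).intervalIntegrable _ _) ((hcf.pow 2).intervalIntegrable _ _)
  have hadd2 : (∫ z in (z₀ - R)..z₀, (deriv f z) ^ 2)
        + (∫ z in z₀..(z₀ + R), (deriv f z) ^ 2)
      = ∫ z in (z₀ - R)..(z₀ + R), (deriv f z) ^ 2 :=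
    intervalIntegral.integral_add_adjacent_intervals
      ((hcf'.pow 2).intervalIntegrable _ _) ((hcf'.pow 2).intervalIntegrable _ _)
  have hmono : (∫ z in (z₀ - R)..(z₀ + R), (deriv f z) ^ 2)
      ≤ ∫ z in (0:ℝ)..ℓ, (deriv f z) ^ 2 := by
    apply intervalIntegral.integral_mono_interval hz₀l (by linarith) hz₀r
    · filter_upwards with x using sq_nonneg _
    · exact (hcf'.pow 2).intervalIntegrable _ _
  have key : 1 / B ^ 2 * (∫ z in (z₀ - R)..(z₀ + R), f z ^ 2)
      ≤ (∫ z in (z₀ - R)..(z₀ + R), (deriv f z) ^ 2) + A / α * f z₀ ^ 2 := by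
    rw [← hadd1, ← hadd2]
    have : A / (2 * α) + A / (2 * α) = A / α := by field_simp; ring
    nlinarith [cP, cM]
  have hfin := mul_le_mul_of_nonneg_left key hα.le
  calc α / B ^ 2 * ∫ z in (z₀ - R)..(z₀ + R), f z ^ 2
      = α * (1 / B ^ 2 * ∫ z in (z₀ - R)..(z₀ + R), f z ^ 2) := by ring
    _ ≤ α * ((∫ z in (z₀ - R)..(z₀ + R), (deriv f z) ^ 2) + A / α * f z₀ ^ 2) := hfin
    _ = α * (∫ z in (z₀ - R)..(z₀ + R), (deriv f z) ^ 2) + A * f z₀ ^ 2 := by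
        field_simp
    _ ≤ α * (∫ z in (0:ℝ)..ℓ, (deriv f z) ^ 2) + A * f z₀ ^ 2 := by
        have := mul_le_mul_of_nonneg_left hmono hα.le
        linarith
end

section
/- For every C¹ function φ : ℝ → ℝ with φ ∈ L²(ℝ) and φ′ ∈ L²(ℝ), and for all z, z′ ∈ ℝ: |φ(z)² − φ(z′)²| ≤ 2|z − z′|^{1/2}·(∫_ℝ φ²)^{1/4}·(∫_ℝ (φ′)²)^{3/4}. -/
open MeasureTheory Real Filter Set Topology

/-- For a C¹ function `φ` with `φ, φ′ ∈ L²(ℝ)`: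
`|φ(z)² − φ(z′)²| ≤ 2|z−z′|^{1/2} (∫φ²)^{1/4} (∫(φ′)²)^{3/4}`. -/
theorem stmt17 (φ : ℝ → ℝ) (hφ : ContDiff ℝ 1 φ)
    (hφ2 : Integrable (fun z => (φ z) ^ 2))
    (hφ'2 : Integrable (fun z => (deriv φ z) ^ 2))
    (z z' : ℝ) :
    |(φ z) ^ 2 - (φ z') ^ 2| ≤
      2 * |z - z'| ^ ((1:ℝ)/2) * (∫ t, (φ t) ^ 2) ^ ((1:ℝ)/4)
        * (∫ t, (deriv φ t) ^ 2) ^ ((3:ℝ)/4) := by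
  have hd : Differentiable ℝ φ := hφ.differentiable one_ne_zero
  have hc : Continuous φ := hφ.continuous
  have hc' : Continuous (deriv φ) := hφ.continuous_deriv le_rfl
  have hmφ : MemLp φ 2 volume := (memLp_two_iff_integrable_sq hc.aestronglyMeasurable).mpr hφ2
  have hmφ' : MemLp (deriv φ) 2 volume :=
    (memLp_two_iff_integrable_sq hc'.aestronglyMeasurable).mpr hφ'2
  have hint_prod : Integrable (fun t => φ t * deriv φ t) := by
    have h := hmφ'.smul (p := 2) (q := 2) (r := 1) hmφ (hpqr := ?_)
    · exact memLp_one_iff_integrable.mp h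
    · exact ⟨by simp [ENNReal.inv_two_add_inv_two]⟩
  have conj22 : Real.HolderConjugate 2 2 := Real.HolderConjugate.two_two
  have habs : ∀ a : ℝ, |a| ^ (2:ℝ) = a ^ 2 := fun a => by
    rw [show (2:ℝ) = ((2:ℕ):ℝ) by norm_num, Real.rpow_natCast, sq_abs]
  set A := ∫ t, (φ t) ^ 2 with hA
  set B := ∫ t, (deriv φ t) ^ 2 with hB
  have hA0 : 0 ≤ A := integral_nonneg fun t => sq_nonneg _
  have hB0 : 0 ≤ B := integral_nonneg fun t => sq_nonneg _
  -- Cauchy–Schwarz on ℝ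
  have hCS : ∫ t, |φ t| * |deriv φ t| ≤ A ^ ((1:ℝ)/2) * B ^ ((1:ℝ)/2) := by
    have h := integral_mul_le_Lp_mul_Lq_of_nonneg (μ := volume) conj22
      (f := fun t => |φ t|) (g := fun t => |deriv φ t|)
      (Eventually.of_forall fun t => abs_nonneg _)
      (Eventually.of_forall fun t => abs_nonneg _)
      (by simpa using hmφ.norm) (by simpa using hmφ'.norm)
    simpa [habs] using h
  have hψ : ∀ t : ℝ, HasDerivAt (fun t => φ t ^ 2) (2 * (φ t * deriv φ t)) t := by
    intro t
    have := ((hd t).hasDerivAt).fun_pow 2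
    simpa [mul_comm, mul_assoc, mul_left_comm] using this
  have hg : Integrable (fun t => 2 * (φ t * deriv φ t)) := hint_prod.const_mul 2
  -- the sup bound `φ x ^ 2 ≤ ∫ |φ||φ'|`
  have hsup : ∀ x : ℝ, (φ x) ^ 2 ≤ ∫ t, |φ t| * |deriv φ t| := by
    intro x
    have htop : Tendsto (fun t => φ t ^ 2) atTop (𝓝 0) :=
      tendsto_zero_of_hasDerivAt_of_integrableOn_Ioi (a := x) (fun t _ => hψ t)
        hg.integrableOn hφ2.integrableOn
    have hbot : Tendsto (fun t => φ t ^ 2) atBot (𝓝 0) :=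
      tendsto_zero_of_hasDerivAt_of_integrableOn_Iic (a := x) (fun t _ => hψ t)
        hg.integrableOn hφ2.integrableOn
    have eq1 : ∫ t in Ioi x, 2 * (φ t * deriv φ t) = 0 - φ x ^ 2 :=
      integral_Ioi_of_hasDerivAt_of_tendsto' (fun t _ => hψ t) hg.integrableOn htop
    have eq2 : ∫ t in Iic x, 2 * (φ t * deriv φ t) = φ x ^ 2 - 0 :=
      integral_Iic_of_hasDerivAt_of_tendsto' (fun t _ => hψ t) hg.integrableOn hbot
    have habs2 : Integrable (fun t => 2 * (|φ t| * |deriv φ t|)) := by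
      simpa [abs_mul] using (hint_prod.abs.const_mul 2)
    have hle : (fun t => 2 * (φ t * deriv φ t)) ≤ fun t => 2 * (|φ t| * |deriv φ t|) := by
      intro t; dsimp only
      rw [← abs_mul]
      have := le_abs_self (φ t * deriv φ t); linarith
    have hle' : (fun t => -(2 * (φ t * deriv φ t))) ≤ fun t => 2 * (|φ t| * |deriv φ t|) := by
      intro t; dsimp only
      rw [← abs_mul]
      have := neg_le_abs (φ t * deriv φ t); linarith
    have h1 : φ x ^ 2 ≤ ∫ t in Ioi x, 2 * (|φ t| * |deriv φ t|) := by
      have e : φ x ^ 2 = ∫ t in Ioi x, -(2 * (φ t * deriv φ t)) := by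
        rw [integral_neg, eq1]; ring
      rw [e]
      exact integral_mono hg.integrableOn.neg habs2.integrableOn hle'
    have h2 : φ x ^ 2 ≤ ∫ t in Iic x, 2 * (|φ t| * |deriv φ t|) := by
      have e : φ x ^ 2 = ∫ t in Iic x, 2 * (φ t * deriv φ t) := by rw [eq2]; ring
      rw [e]
      exact integral_mono hg.integrableOn habs2.integrableOn hle
    have hsplit : (∫ t in Iic x, 2 * (|φ t| * |deriv φ t|))
        + ∫ t in Ioi x, 2 * (|φ t| * |deriv φ t|) = ∫ t, 2 * (|φ t| * |deriv φ t|) := by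
      have := integral_add_compl (measurableSet_Iic (a := x)) habs2
      simpa [compl_Iic] using this
    have hfull : ∫ t, 2 * (|φ t| * |deriv φ t|) = 2 * ∫ t, |φ t| * |deriv φ t| :=
      integral_const_mul 2 _
    linarith
  -- the sup bound in convenient form
  set M : ℝ := A ^ ((1:ℝ)/4) * B ^ ((1:ℝ)/4) with hMdef
  have hM0 : 0 ≤ M := mul_nonneg (Real.rpow_nonneg hA0 _) (Real.rpow_nonneg hB0 _)
  have hM : ∀ x : ℝ, |φ x| ≤ M := by
    intro x
    have hx : φ x ^ 2 ≤ A ^ ((1:ℝ)/2) * B ^ ((1:ℝ)/2) := (hsup x).trans hCS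
    calc |φ x| = Real.sqrt (φ x ^ 2) := (Real.sqrt_sq_eq_abs _).symm
      _ ≤ Real.sqrt (A ^ ((1:ℝ)/2) * B ^ ((1:ℝ)/2)) := Real.sqrt_le_sqrt hx
      _ = (A ^ ((1:ℝ)/2) * B ^ ((1:ℝ)/2)) ^ ((1:ℝ)/2) := by
          rw [Real.sqrt_eq_rpow]
      _ = M := by
          rw [hMdef, Real.mul_rpow (Real.rpow_nonneg hA0 _) (Real.rpow_nonneg hB0 _),
            ← Real.rpow_mul hA0, ← Real.rpow_mul hB0]
          norm_num
  -- main estimate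
  have main : |(φ z) ^ 2 - (φ z') ^ 2| ≤
      2 * M * (|z - z'| ^ ((1:ℝ)/2) * B ^ ((1:ℝ)/2)) := by
    set s : Set ℝ := uIoc z' z with hs
    have hsm : MeasurableSet s := measurableSet_uIoc
    have hvol : volume s = ENNReal.ofReal |z - z'| := by
      rw [hs, uIoc, Real.volume_Ioc, max_sub_min_eq_abs]
    have hgc : Continuous (fun t => 2 * (φ t * deriv φ t)) := by fun_prop
    have key : ∫ t in z'..z, 2 * (φ t * deriv φ t) = φ z ^ 2 - φ z' ^ 2 :=
      intervalIntegral.integral_eq_sub_of_hasDerivAt (fun t _ => hψ t)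
        (hgc.intervalIntegrable z' z)
    have step1 : |φ z ^ 2 - φ z' ^ 2| ≤ ∫ t in s, |2 * (φ t * deriv φ t)| := by
      rw [← key]
      have h := intervalIntegral.norm_integral_le_integral_norm_uIoc
          (f := fun t => 2 * (φ t * deriv φ t)) (a := z') (b := z) (μ := volume)
      simp only [Real.norm_eq_abs] at h
      exact h
    have step2 : ∫ t in s, |2 * (φ t * deriv φ t)| ≤ ∫ t in s, 2 * M * |deriv φ t| := by
      refine setIntegral_mono_on ?_ ?_ hsm fun t _ => ?_
      · exact (hgc.abs.integrableOn_uIoc)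
      · exact ((continuous_const.mul hc'.abs).integrableOn_uIoc)
      · rw [abs_mul, abs_mul]
        have h1 : |φ t| * |deriv φ t| ≤ M * |deriv φ t| :=
          mul_le_mul_of_nonneg_right (hM t) (abs_nonneg _)
        have : |(2:ℝ)| = 2 := by norm_num
        rw [this]; nlinarith [abs_nonneg (deriv φ t)]
    haveI : IsFiniteMeasure (volume.restrict s) := by
      constructor
      rw [Measure.restrict_apply_univ, hvol]
      exact ENNReal.ofReal_lt_top
    have step3 : ∫ t in s, |deriv φ t| ≤ |z - z'| ^ ((1:ℝ)/2) * B ^ ((1:ℝ)/2) := by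
      have h := integral_mul_le_Lp_mul_Lq_of_nonneg (μ := volume.restrict s) conj22
        (f := fun t => |deriv φ t|) (g := fun _ => (1:ℝ))
        (Eventually.of_forall fun t => abs_nonneg _)
        (Eventually.of_forall fun t => zero_le_one)
        (by simpa using (hmφ'.restrict s).norm)
        (by simpa using memLp_const (μ := volume.restrict s) (1:ℝ))
      simp only [mul_one, habs] at h
      have hone : ∫ (_ : ℝ) in s, (1:ℝ) ^ (2:ℝ) ∂volume = |z - z'| := by
        simp [Measure.real, hvol, ENNReal.toReal_ofReal (abs_nonneg _)]
      rw [hone] at h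
      refine h.trans ?_
      have h2 : (∫ t in s, deriv φ t ^ 2) ^ ((1:ℝ)/2) ≤ B ^ ((1:ℝ)/2) :=
        Real.rpow_le_rpow (integral_nonneg fun t => sq_nonneg _)
          (setIntegral_le_integral hφ'2 (Eventually.of_forall fun t => sq_nonneg _))
          (by norm_num)
      calc (∫ t in s, deriv φ t ^ 2) ^ ((1:ℝ)/2) * |z - z'| ^ ((1:ℝ)/2)
          ≤ B ^ ((1:ℝ)/2) * |z - z'| ^ ((1:ℝ)/2) :=
            mul_le_mul_of_nonneg_right h2 (Real.rpow_nonneg (abs_nonneg _) _)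
        _ = |z - z'| ^ ((1:ℝ)/2) * B ^ ((1:ℝ)/2) := mul_comm _ _
    calc |φ z ^ 2 - φ z' ^ 2| ≤ ∫ t in s, |2 * (φ t * deriv φ t)| := step1
      _ ≤ ∫ t in s, 2 * M * |deriv φ t| := step2
      _ = 2 * M * ∫ t in s, |deriv φ t| := integral_const_mul _ _
      _ ≤ 2 * M * (|z - z'| ^ ((1:ℝ)/2) * B ^ ((1:ℝ)/2)) :=
          mul_le_mul_of_nonneg_left step3 (by positivity)
  refine main.trans (le_of_eq ?_)
  rw [hMdef]
  have hBsum : B ^ ((1:ℝ)/4) * B ^ ((1:ℝ)/2) = B ^ ((3:ℝ)/4) := by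
    rw [← Real.rpow_add_of_nonneg hB0 (by norm_num) (by norm_num)]
    norm_num
  calc 2 * (A ^ ((1:ℝ)/4) * B ^ ((1:ℝ)/4)) * (|z - z'| ^ ((1:ℝ)/2) * B ^ ((1:ℝ)/2))
      = 2 * |z - z'| ^ ((1:ℝ)/2) * A ^ ((1:ℝ)/4) * (B ^ ((1:ℝ)/4) * B ^ ((1:ℝ)/2)) := by ring
    _ = 2 * |z - z'| ^ ((1:ℝ)/2) * A ^ ((1:ℝ)/4) * B ^ ((3:ℝ)/4) := by rw [hBsum]
end

section
/- For all integers n ≥ 1 and all ℓ > 0, g ≥ 0, the following two upper bounds hold: E_N^{1D}(n,ℓ,g) ≤ g·n(n−1)/(2ℓ), and E_N^{1D}(n,ℓ,g) ≤ (π²/3)·n³/ℓ². -/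
open MeasureTheory Real Filter Set
open scoped ENNReal

noncomputable section

namespace LLaux

/-- Neumann eigenfunctions on [0,ℓ]. -/
def phi (ℓ : ℝ) (k : ℕ) (x : ℝ) : ℝ :=
  if k = 0 then (Real.sqrt ℓ)⁻¹ else Real.sqrt (2/ℓ) * Real.cos (k*π*x/ℓ)

def dphi (ℓ : ℝ) (k : ℕ) (x : ℝ) : ℝ :=
  if k = 0 then 0 else -(Real.sqrt (2/ℓ) * ((k*π/ℓ) * Real.sin (k*π*x/ℓ)))

lemma cont_phi (ℓ : ℝ) (k : ℕ) : Continuous (phi ℓ k) := by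
  unfold phi; split
  · exact continuous_const
  · fun_prop

lemma cont_dphi (ℓ : ℝ) (k : ℕ) : Continuous (dphi ℓ k) := by
  unfold dphi; split
  · exact continuous_const
  · fun_prop

lemma hasDerivAt_phi (ℓ : ℝ) (hℓ : 0 < ℓ) (k : ℕ) (x : ℝ) :
    HasDerivAt (phi ℓ k) (dphi ℓ k x) x := by
  unfold phi dphi
  split
  · exact hasDerivAt_const x _
  · have h1 : ∀ y : ℝ, (k:ℝ)*π*y/ℓ = ((k:ℝ)*π/ℓ) * y := fun y => by ring
    have h : HasDerivAt (fun y : ℝ => Real.cos ((k:ℝ)*π*y/ℓ))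
        (-(Real.sin ((k:ℝ)*π*x/ℓ)) * ((k:ℝ)*π/ℓ)) x := by
      simp_rw [h1]
      have hx : HasDerivAt (fun y : ℝ => ((k:ℝ)*π/ℓ) * y) (((k:ℝ)*π/ℓ)) x := by
        simpa using (hasDerivAt_id x).const_mul (((k:ℝ)*π/ℓ))
      exact (Real.hasDerivAt_cos (((k:ℝ)*π/ℓ) * x)).comp x hx
    have := h.const_mul (Real.sqrt (2/ℓ))
    exact this.congr_deriv (by ring)

lemma contDiff_phi (ℓ : ℝ) (k : ℕ) : ContDiff ℝ 1 (phi ℓ k) := by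
  unfold phi; split
  · exact contDiff_const
  · apply ContDiff.mul contDiff_const
    apply Real.contDiff_cos.comp
    have : (fun x : ℝ => (k:ℝ)*π*x/ℓ) = fun x => ((k:ℝ)*π/ℓ)*x := by funext x; ring
    rw [this]; fun_prop

/-- basic cosine integral -/
lemma int_cos_int (ℓ : ℝ) (hℓ : 0 < ℓ) (m : ℤ) :
    ∫ x in (0:ℝ)..ℓ, Real.cos ((m:ℝ)*π*x/ℓ) = if m = 0 then ℓ else 0 := by
  rcases eq_or_ne m 0 with hm | hm
  · simp [hm]
  · have hc : (m:ℝ)*π/ℓ ≠ 0 := by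
      have : (m:ℝ) ≠ 0 := Int.cast_ne_zero.mpr hm
      have := Real.pi_pos
      positivity
    have h1 : ∀ x : ℝ, (m:ℝ)*π*x/ℓ = ((m:ℝ)*π/ℓ) * x := fun x => by ring
    simp_rw [h1]
    rw [intervalIntegral.integral_comp_mul_left (fun x => Real.cos x) hc]
    have : (m:ℝ)*π/ℓ*ℓ = (m:ℝ)*π := by field_simp
    simp [this, Real.sin_int_mul_pi, hm]


lemma phi_zero (ℓ : ℝ) (x : ℝ) : phi ℓ 0 x = (Real.sqrt ℓ)⁻¹ := if_pos rfl
lemma phi_pos (ℓ : ℝ) {k : ℕ} (hk : k ≠ 0) (x : ℝ) :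
    phi ℓ k x = Real.sqrt (2/ℓ) * Real.cos ((k:ℝ)*π*x/ℓ) := if_neg hk
lemma dphi_zero (ℓ : ℝ) (x : ℝ) : dphi ℓ 0 x = 0 := if_pos rfl
lemma dphi_pos (ℓ : ℝ) {k : ℕ} (hk : k ≠ 0) (x : ℝ) :
    dphi ℓ k x = -(Real.sqrt (2/ℓ) * (((k:ℝ)*π/ℓ) * Real.sin ((k:ℝ)*π*x/ℓ))) := if_neg hk

lemma int_phi (ℓ : ℝ) (hℓ : 0 < ℓ) (a b : ℕ) :
    ∫ x in (0:ℝ)..ℓ, phi ℓ a x * phi ℓ b x = if a = b then 1 else 0 := by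
  rcases eq_or_ne a 0 with ha | ha <;> rcases eq_or_ne b 0 with hb | hb
  · subst ha; subst hb
    simp_rw [phi_zero]
    rw [intervalIntegral.integral_const]
    simp only [smul_eq_mul, sub_zero, if_pos rfl]
    rw [← mul_inv, Real.mul_self_sqrt hℓ.le]
    field_simp
    simp
  · subst ha
    simp_rw [phi_zero, phi_pos ℓ hb]
    have h1 : ∀ x : ℝ, (Real.sqrt ℓ)⁻¹ * (Real.sqrt (2/ℓ) * Real.cos ((b:ℝ)*π*x/ℓ))
        = ((Real.sqrt ℓ)⁻¹ * Real.sqrt (2/ℓ)) * Real.cos (((b:ℤ):ℝ)*π*x/ℓ) := by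
      intro x; push_cast; ring
    simp_rw [h1]
    rw [intervalIntegral.integral_const_mul, int_cos_int ℓ hℓ b]
    have hb' : (b:ℤ) ≠ 0 := by exact_mod_cast hb
    simp [hb', Ne.symm hb, hb]
  · subst hb
    simp_rw [phi_zero, phi_pos ℓ ha]
    have h1 : ∀ x : ℝ, (Real.sqrt (2/ℓ) * Real.cos ((a:ℝ)*π*x/ℓ)) * (Real.sqrt ℓ)⁻¹
        = ((Real.sqrt ℓ)⁻¹ * Real.sqrt (2/ℓ)) * Real.cos (((a:ℤ):ℝ)*π*x/ℓ) := by
      intro x; push_cast; ring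
    simp_rw [h1]
    rw [intervalIntegral.integral_const_mul, int_cos_int ℓ hℓ a]
    have ha' : (a:ℤ) ≠ 0 := by exact_mod_cast ha
    simp [ha', ha]
  · simp_rw [phi_pos ℓ ha, phi_pos ℓ hb]
    set d : ℤ := (a:ℤ) - (b:ℤ) with hd
    set s : ℤ := (a:ℤ) + (b:ℤ) with hs
    have key : ∀ x : ℝ, (Real.sqrt (2/ℓ) * Real.cos ((a:ℝ)*π*x/ℓ)) * (Real.sqrt (2/ℓ) * Real.cos ((b:ℝ)*π*x/ℓ))
        = (1/ℓ) * (Real.cos ((d:ℝ)*π*x/ℓ) + Real.cos ((s:ℝ)*π*x/ℓ)) := by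
      intro x
      have h2 : Real.sqrt (2/ℓ) * Real.sqrt (2/ℓ) = 2/ℓ := Real.mul_self_sqrt (by positivity)
      have e1 : (d:ℝ)*π*x/ℓ = (a:ℝ)*π*x/ℓ - (b:ℝ)*π*x/ℓ := by rw [hd]; push_cast; ring
      have e2 : (s:ℝ)*π*x/ℓ = (a:ℝ)*π*x/ℓ + (b:ℝ)*π*x/ℓ := by rw [hs]; push_cast; ring
      rw [e1, e2, Real.cos_sub, Real.cos_add]
      rw [mul_mul_mul_comm, h2]
      have hℓ' : ℓ ≠ 0 := hℓ.ne'
      field_simp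
      ring
    simp_rw [key]
    have i1 : IntervalIntegrable (fun x => Real.cos ((d:ℝ)*π*x/ℓ)) volume 0 ℓ := by
      apply Continuous.intervalIntegrable; fun_prop
    have i2 : IntervalIntegrable (fun x => Real.cos ((s:ℝ)*π*x/ℓ)) volume 0 ℓ := by
      apply Continuous.intervalIntegrable; fun_prop
    rw [intervalIntegral.integral_const_mul, intervalIntegral.integral_add i1 i2,
      int_cos_int ℓ hℓ d, int_cos_int ℓ hℓ s]
    have hs2 : s ≠ 0 := by
      rw [hs]; have : (a:ℤ) ≠ 0 := by exact_mod_cast ha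
      positivity
    rcases eq_or_ne a b with h | h
    · subst h
      have hd0 : d = 0 := by rw [hd]; ring
      rw [if_pos hd0, if_neg hs2, if_pos rfl]
      field_simp
      ring
    · have hd0 : d ≠ 0 := by rw [hd]; exact sub_ne_zero.mpr (by exact_mod_cast h)
      rw [if_neg hd0, if_neg hs2, if_neg h]
      ring

lemma int_dphi (ℓ : ℝ) (hℓ : 0 < ℓ) (a b : ℕ) :
    ∫ x in (0:ℝ)..ℓ, dphi ℓ a x * dphi ℓ b x = if a = b then ((a:ℝ)*π/ℓ)^2 else 0 := by
  rcases eq_or_ne a 0 with ha | ha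
  · subst ha; simp [dphi_zero]
  rcases eq_or_ne b 0 with hb | hb
  · subst hb; simp [dphi_zero, Ne.symm ha, ha]
  simp_rw [dphi_pos ℓ ha, dphi_pos ℓ hb]
  set d : ℤ := (a:ℤ) - (b:ℤ) with hd
  set s : ℤ := (a:ℤ) + (b:ℤ) with hs
  set C : ℝ := (1/ℓ) * (((a:ℝ)*π/ℓ) * ((b:ℝ)*π/ℓ)) with hC
  have key : ∀ x : ℝ, (-(Real.sqrt (2/ℓ) * (((a:ℝ)*π/ℓ) * Real.sin ((a:ℝ)*π*x/ℓ)))) *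
        (-(Real.sqrt (2/ℓ) * (((b:ℝ)*π/ℓ) * Real.sin ((b:ℝ)*π*x/ℓ))))
      = C * (Real.cos ((d:ℝ)*π*x/ℓ) - Real.cos ((s:ℝ)*π*x/ℓ)) := by
    intro x
    have h2 : Real.sqrt (2/ℓ) * Real.sqrt (2/ℓ) = 2/ℓ := Real.mul_self_sqrt (by positivity)
    have e1 : (d:ℝ)*π*x/ℓ = (a:ℝ)*π*x/ℓ - (b:ℝ)*π*x/ℓ := by rw [hd]; push_cast; ring
    have e2 : (s:ℝ)*π*x/ℓ = (a:ℝ)*π*x/ℓ + (b:ℝ)*π*x/ℓ := by rw [hs]; push_cast; ring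
    rw [e1, e2, Real.cos_sub, Real.cos_add, hC]
    have : (-(Real.sqrt (2/ℓ) * (((a:ℝ)*π/ℓ) * Real.sin ((a:ℝ)*π*x/ℓ)))) *
        (-(Real.sqrt (2/ℓ) * (((b:ℝ)*π/ℓ) * Real.sin ((b:ℝ)*π*x/ℓ))))
        = (Real.sqrt (2/ℓ) * Real.sqrt (2/ℓ)) * ((((a:ℝ)*π/ℓ) * ((b:ℝ)*π/ℓ)) *
            (Real.sin ((a:ℝ)*π*x/ℓ) * Real.sin ((b:ℝ)*π*x/ℓ))) := by ring
    rw [this, h2]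
    have hℓ' : ℓ ≠ 0 := hℓ.ne'
    field_simp
    ring
  simp_rw [key]
  have i1 : IntervalIntegrable (fun x => Real.cos ((d:ℝ)*π*x/ℓ)) volume 0 ℓ := by
    apply Continuous.intervalIntegrable; fun_prop
  have i2 : IntervalIntegrable (fun x => Real.cos ((s:ℝ)*π*x/ℓ)) volume 0 ℓ := by
    apply Continuous.intervalIntegrable; fun_prop
  rw [intervalIntegral.integral_const_mul, intervalIntegral.integral_sub i1 i2,
    int_cos_int ℓ hℓ d, int_cos_int ℓ hℓ s]
  have hs2 : s ≠ 0 := by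
    rw [hs]; have : (a:ℤ) ≠ 0 := by exact_mod_cast ha
    positivity
  rcases eq_or_ne a b with h | h
  · subst h
    have hd0 : d = 0 := by rw [hd]; ring
    rw [if_pos hd0, if_neg hs2, if_pos rfl, hC]
    field_simp
    ring
  · have hd0 : d ≠ 0 := by rw [hd]; exact sub_ne_zero.mpr (by exact_mod_cast h)
    rw [if_neg hd0, if_neg hs2, if_neg h]
    ring

lemma measurableSet_box (n : ℕ) (ℓ : ℝ) : MeasurableSet (box n ℓ) :=
  MeasurableSet.univ_pi fun _ => measurableSet_Icc

lemma isCompact_box (n : ℕ) (ℓ : ℝ) : IsCompact (box n ℓ) :=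
  isCompact_univ_pi fun _ => isCompact_Icc

lemma box_prod_integral (n : ℕ) {ℓ : ℝ} (hℓ : 0 < ℓ) (f : Fin n → ℝ → ℝ) :
    ∫ z in box n ℓ, ∏ i, f i (z i) = ∏ i, ∫ x in (0:ℝ)..ℓ, f i x := by
  rw [← integral_indicator (measurableSet_box n ℓ)]
  have h1 : (box n ℓ).indicator (fun z => ∏ i, f i (z i))
      = fun z => ∏ i, (Set.Icc (0:ℝ) ℓ).indicator (f i) (z i) := by
    funext z
    by_cases hz : z ∈ box n ℓ
    · rw [Set.indicator_of_mem hz]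
      refine Finset.prod_congr rfl fun i _ => ?_
      have : z i ∈ Set.Icc (0:ℝ) ℓ := hz i (Set.mem_univ i)
      rw [Set.indicator_of_mem this]
    · rw [Set.indicator_of_notMem hz]
      have : ∃ i, z i ∉ Set.Icc (0:ℝ) ℓ := by
        by_contra hcon
        push_neg at hcon
        exact hz fun i _ => hcon i
      obtain ⟨i, hi⟩ := this
      exact (Finset.prod_eq_zero (Finset.mem_univ i) (Set.indicator_of_notMem hi _)).symm
  rw [h1, volume_pi, MeasureTheory.integral_fintype_prod_eq_prod
    (fun i => (Set.Icc (0:ℝ) ℓ).indicator (f i))]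
  refine Finset.prod_congr rfl fun i _ => ?_
  rw [integral_indicator measurableSet_Icc, MeasureTheory.integral_Icc_eq_integral_Ioc,
    ← intervalIntegral.integral_of_le hℓ.le]

lemma units_sq_real (u : ℤˣ) : ((u:ℤ):ℝ) * ((u:ℤ):ℝ) = 1 := by
  rcases Int.units_eq_one_or u with h | h <;> simp [h]

lemma perm_expand {n : ℕ} {ℓ : ℝ} (hℓ : 0 < ℓ) (v : Fin n → ℕ → ℝ → ℝ)
    (hc : ∀ i k, Continuous (v i k)) (r : Fin n → ℕ → ℝ)
    (ho : ∀ (i : Fin n) (a b : ℕ),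
      (∫ x in (0:ℝ)..ℓ, v i a x * v i b x) = if a = b then r i a else 0) :
    ∫ z in box n ℓ,
        (∑ σ : Equiv.Perm (Fin n), ((Equiv.Perm.sign σ : ℤ):ℝ) * ∏ i, v i (σ i) (z i))^2
      = ∑ σ : Equiv.Perm (Fin n), ∏ i, r i (σ i) := by
  classical
  have hint : ∀ σ τ : Equiv.Perm (Fin n),
      IntegrableOn (fun z : Fin n → ℝ =>
        (((Equiv.Perm.sign σ : ℤ):ℝ) * ((Equiv.Perm.sign τ : ℤ):ℝ)) *
          ∏ i, (v i (σ i) (z i) * v i (τ i) (z i))) (box n ℓ) := by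
    intro σ τ
    refine ContinuousOn.integrableOn_compact (isCompact_box n ℓ) (Continuous.continuousOn ?_)
    exact continuous_const.mul (continuous_finset_prod _ fun i _ =>
      ((hc i (σ i)).comp (continuous_apply i)).mul ((hc i (τ i)).comp (continuous_apply i)))
  have hpt : ∀ z : Fin n → ℝ,
      (∑ σ : Equiv.Perm (Fin n), ((Equiv.Perm.sign σ : ℤ):ℝ) * ∏ i, v i (σ i) (z i))^2
      = ∑ σ : Equiv.Perm (Fin n), ∑ τ : Equiv.Perm (Fin n),
          (((Equiv.Perm.sign σ : ℤ):ℝ) * ((Equiv.Perm.sign τ : ℤ):ℝ)) *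
            ∏ i, (v i (σ i) (z i) * v i (τ i) (z i)) := by
    intro z
    rw [sq, Finset.sum_mul_sum]
    refine Finset.sum_congr rfl fun σ _ => Finset.sum_congr rfl fun τ _ => ?_
    rw [Finset.prod_mul_distrib]; ring
  calc ∫ z in box n ℓ,
        (∑ σ : Equiv.Perm (Fin n), ((Equiv.Perm.sign σ : ℤ):ℝ) * ∏ i, v i (σ i) (z i))^2
      = ∫ z in box n ℓ, ∑ σ : Equiv.Perm (Fin n), ∑ τ : Equiv.Perm (Fin n),
          (((Equiv.Perm.sign σ : ℤ):ℝ) * ((Equiv.Perm.sign τ : ℤ):ℝ)) *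
            ∏ i, (v i (σ i) (z i) * v i (τ i) (z i)) := by simp_rw [hpt]
    _ = ∑ σ : Equiv.Perm (Fin n), ∑ τ : Equiv.Perm (Fin n),
          ∫ z in box n ℓ, (((Equiv.Perm.sign σ : ℤ):ℝ) * ((Equiv.Perm.sign τ : ℤ):ℝ)) *
            ∏ i, (v i (σ i) (z i) * v i (τ i) (z i)) := by
        rw [integral_finset_sum _ fun σ _ => integrable_finset_sum _ fun τ _ => hint σ τ]
        exact Finset.sum_congr rfl fun σ _ => integral_finset_sum _ fun τ _ => hint σ τ
    _ = ∑ σ : Equiv.Perm (Fin n), ∑ τ : Equiv.Perm (Fin n),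
          (((Equiv.Perm.sign σ : ℤ):ℝ) * ((Equiv.Perm.sign τ : ℤ):ℝ)) *
            (if σ = τ then ∏ i, r i (σ i) else 0) := by
        refine Finset.sum_congr rfl fun σ _ => Finset.sum_congr rfl fun τ _ => ?_
        rw [MeasureTheory.integral_const_mul,
          box_prod_integral n hℓ (fun i x => v i (σ i) x * v i (τ i) x)]
        congr 1
        have : ∀ i : Fin n, (∫ x in (0:ℝ)..ℓ, v i (σ i) x * v i (τ i) x)
            = if ((σ i : ℕ)) = ((τ i : ℕ)) then r i (σ i) else 0 := fun i => ho i _ _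
        simp_rw [this]
        rcases eq_or_ne σ τ with h | h
        · subst h; simp
        · have : ∃ i, σ i ≠ τ i := by
            by_contra hcon; push_neg at hcon; exact h (Equiv.ext hcon)
          obtain ⟨i, hi⟩ := this
          rw [if_neg h]
          refine Finset.prod_eq_zero (Finset.mem_univ i) ?_
          rw [if_neg]
          exact fun hval => hi (Fin.val_injective hval)
    _ = ∑ σ : Equiv.Perm (Fin n), ∏ i, r i (σ i) := by
        refine Finset.sum_congr rfl fun σ _ => ?_
        rw [Finset.sum_eq_single σ]
        · rw [if_pos rfl, units_sq_real, one_mul]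
        · intro τ _ hτ; rw [if_neg (Ne.symm hτ), mul_zero]
        · intro h; exact absurd (Finset.mem_univ σ) h

def psiF (n : ℕ) (ℓ : ℝ) (z : Fin n → ℝ) : ℝ :=
  (Real.sqrt (Nat.factorial n))⁻¹ *
    ∑ σ : Equiv.Perm (Fin n), ((Equiv.Perm.sign σ : ℤ):ℝ) * ∏ i, phi ℓ (σ i) (z i)

lemma contDiff_psiF (n : ℕ) (ℓ : ℝ) : ContDiff ℝ 1 (psiF n ℓ) := by
  apply ContDiff.mul contDiff_const
  apply ContDiff.sum
  intro σ _
  apply ContDiff.mul contDiff_const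
  apply contDiff_prod
  intro i _
  exact (contDiff_phi ℓ (σ i)).comp (ContinuousLinearMap.proj i :
    (Fin n → ℝ) →L[ℝ] ℝ).contDiff

lemma sq_inv_sqrt_factorial (n : ℕ) :
    ((Real.sqrt (Nat.factorial n))⁻¹)^2 = ((Nat.factorial n : ℝ))⁻¹ := by
  rw [inv_pow, Real.sq_sqrt (by positivity)]

lemma norm_psiF {n : ℕ} {ℓ : ℝ} (hℓ : 0 < ℓ) :
    ∫ z in box n ℓ, (psiF n ℓ z)^2 = 1 := by
  simp_rw [psiF, mul_pow]
  rw [MeasureTheory.integral_const_mul,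
    perm_expand hℓ (fun _ => phi ℓ) (fun _ k => cont_phi ℓ k) (fun _ _ => 1)
      (fun _ a b => int_phi ℓ hℓ a b)]
  simp only [Finset.prod_const_one, Finset.sum_const, Finset.card_univ, Fintype.card_perm,
    Fintype.card_fin, nsmul_eq_mul, mul_one, sq_inv_sqrt_factorial]
  rw [inv_mul_cancel₀ (by positivity)]

lemma hasDerivAt_psiF {n : ℕ} {ℓ : ℝ} (hℓ : 0 < ℓ) (z : Fin n → ℝ) (j : Fin n) :
    HasDerivAt (fun t => psiF n ℓ (Function.update z j t))
      ((Real.sqrt (Nat.factorial n))⁻¹ * ∑ σ : Equiv.Perm (Fin n),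
        ((Equiv.Perm.sign σ : ℤ):ℝ) *
          ∏ i, (if i = j then dphi ℓ else phi ℓ) (σ i) (z i)) (z j) := by
  unfold psiF
  apply HasDerivAt.const_mul
  apply HasDerivAt.fun_sum
  intro σ _
  apply HasDerivAt.const_mul
  have hsplit : ∀ t, ∏ i, phi ℓ (σ i) (Function.update z j t i)
      = phi ℓ (σ j) t * ∏ i ∈ Finset.univ.erase j, phi ℓ (σ i) (z i) := by
    intro t
    rw [← Finset.mul_prod_erase Finset.univ _ (Finset.mem_univ j)]
    congr 1
    · rw [Function.update_self]
    · exact Finset.prod_congr rfl fun i hi => by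
        rw [Function.update_of_ne (Finset.ne_of_mem_erase hi)]
  simp_rw [hsplit]
  have htarget : ∏ i, (if i = j then dphi ℓ else phi ℓ) (σ i) (z i)
      = dphi ℓ (σ j) (z j) * ∏ i ∈ Finset.univ.erase j, phi ℓ (σ i) (z i) := by
    rw [← Finset.mul_prod_erase Finset.univ _ (Finset.mem_univ j)]
    congr 1
    · rw [if_pos rfl]
    · exact Finset.prod_congr rfl fun i hi => by rw [if_neg (Finset.ne_of_mem_erase hi)]
  rw [htarget]
  exact (hasDerivAt_phi ℓ hℓ (σ j) (z j)).mul_const _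

lemma kinetic_psiF {n : ℕ} {ℓ : ℝ} (hℓ : 0 < ℓ) (j : Fin n) :
    ∫ z in box n ℓ, (deriv (fun t => psiF n ℓ (Function.update z j t)) (z j))^2
      = ((Nat.factorial n : ℝ))⁻¹ *
          ∑ σ : Equiv.Perm (Fin n), (((σ j : ℕ):ℝ)*π/ℓ)^2 := by
  have hderiv : ∀ z : Fin n → ℝ, deriv (fun t => psiF n ℓ (Function.update z j t)) (z j)
      = (Real.sqrt (Nat.factorial n))⁻¹ * ∑ σ : Equiv.Perm (Fin n),
          ((Equiv.Perm.sign σ : ℤ):ℝ) * ∏ i, (if i = j then dphi ℓ else phi ℓ) (σ i) (z i) :=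
    fun z => (hasDerivAt_psiF hℓ z j).deriv
  simp_rw [hderiv, mul_pow]
  rw [MeasureTheory.integral_const_mul,
    perm_expand hℓ (fun i => if i = j then dphi ℓ else phi ℓ)
      (fun i k => by split
                     · exact cont_dphi ℓ k
                     · exact cont_phi ℓ k)
      (fun i a => if i = j then ((a:ℝ)*π/ℓ)^2 else 1)
      (fun i a b => by split
                       · exact int_dphi ℓ hℓ a b
                       · exact int_phi ℓ hℓ a b),
    sq_inv_sqrt_factorial]
  congr 1
  refine Finset.sum_congr rfl fun σ _ => ?_
  calc ∏ i, (if i = j then (((σ i : ℕ):ℝ)*π/ℓ)^2 else 1)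
      = (((σ j : ℕ):ℝ)*π/ℓ)^2 := by
        rw [Finset.prod_ite_eq' Finset.univ j (fun i => (((σ i : ℕ):ℝ)*π/ℓ)^2),
          if_pos (Finset.mem_univ j)]

lemma psiF_diag {n : ℕ} {ℓ : ℝ} (z : Fin n → ℝ) {i j : Fin n} (hij : i ≠ j)
    (hz : z i = z j) : psiF n ℓ z = 0 := by
  unfold psiF
  rw [mul_eq_zero]; right
  set e := Equiv.swap i j with hed
  have he : ∀ k, z (e k) = z k := by
    intro k
    rcases eq_or_ne k i with rfl | hki
    · rw [hed, Equiv.swap_apply_left]; exact hz.symm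
    rcases eq_or_ne k j with rfl | hkj
    · rw [hed, Equiv.swap_apply_right]; exact hz
    · rw [hed, Equiv.swap_apply_of_ne_of_ne hki hkj]
  set F : Equiv.Perm (Fin n) → ℝ :=
    fun σ => ((Equiv.Perm.sign σ : ℤ):ℝ) * ∏ k, phi ℓ (σ k) (z k) with hF
  have key : ∀ σ : Equiv.Perm (Fin n), F (σ * e) = -F σ := by
    intro σ
    have hsign : Equiv.Perm.sign (σ * e) = -Equiv.Perm.sign σ := by
      rw [Equiv.Perm.sign_mul, hed, Equiv.Perm.sign_swap hij, mul_neg_one]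
    have hprod : ∏ k, phi ℓ (((σ * e) k : ℕ)) (z k) = ∏ k, phi ℓ ((σ k : ℕ)) (z k) := by
      calc ∏ k, phi ℓ (((σ * e) k : ℕ)) (z k)
          = ∏ k, phi ℓ ((σ (e k) : ℕ)) (z (e (e k))) := by
            refine Finset.prod_congr rfl fun k _ => ?_
            rw [Equiv.Perm.mul_apply, hed, Equiv.swap_apply_self]
        _ = ∏ m, phi ℓ ((σ m : ℕ)) (z (e m)) :=
            Equiv.prod_comp e (fun m => phi ℓ ((σ m : ℕ)) (z (e m)))
        _ = ∏ m, phi ℓ ((σ m : ℕ)) (z m) := Finset.prod_congr rfl fun m _ => by rw [he m]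
    rw [hF]
    dsimp only
    rw [hsign, hprod]
    push_cast
    ring
  have hsum : ∑ σ : Equiv.Perm (Fin n), F σ = -∑ σ : Equiv.Perm (Fin n), F σ := by
    conv_lhs => rw [← Equiv.sum_comp (Equiv.mulRight e) F]
    simp only [Equiv.coe_mulRight]
    rw [Finset.sum_congr rfl fun σ _ => key σ, Finset.sum_neg_distrib]
  have : ∑ σ : Equiv.Perm (Fin n), F σ = 0 := by linarith [hsum]
  exact this

lemma gauss_sum (n : ℕ) : ∑ k ∈ Finset.range n, (k:ℝ) = (n:ℝ)*((n:ℝ)-1)/2 := by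
  induction n with
  | zero => simp
  | succ m ih => rw [Finset.sum_range_succ, ih]; push_cast; ring

lemma sq_sum (n : ℕ) :
    ∑ k ∈ Finset.range n, ((k:ℝ))^2 = (n:ℝ)*((n:ℝ)-1)*(2*(n:ℝ)-1)/6 := by
  induction n with
  | zero => simp
  | succ m ih => rw [Finset.sum_range_succ, ih]; push_cast; ring

lemma pair_count (n : ℕ) :
    ∑ i : Fin n, ((Finset.Ioi i).card : ℝ) = (n:ℝ)*((n:ℝ)-1)/2 := by
  have h : ∀ i : Fin n, ((Finset.Ioi i).card : ℝ) = (n:ℝ) - 1 - ((i:ℕ):ℝ) := by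
    intro i
    rw [Fin.card_Ioi]
    have hi : (i:ℕ) ≤ n - 1 := Nat.le_pred_of_lt i.isLt
    have hn : 1 ≤ n := Nat.one_le_iff_ne_zero.mpr (by rintro rfl; exact absurd i.isLt (by simp))
    rw [Nat.cast_sub hi, Nat.cast_sub hn]
    norm_num
  rw [Finset.sum_congr rfl fun i _ => h i]
  rw [Finset.sum_sub_distrib, Fin.sum_univ_eq_sum_range (fun k => ((k:ℕ):ℝ)) n, gauss_sum]
  simp only [Finset.sum_const, Finset.card_univ, Fintype.card_fin, nsmul_eq_mul]
  ring

lemma adm_psiF {n : ℕ} {ℓ : ℝ} (hℓ : 0 < ℓ) : adm1D n ℓ (psiF n ℓ) :=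
  ⟨contDiff_psiF n ℓ, norm_psiF hℓ⟩

lemma Q1D_psiF {n : ℕ} {ℓ : ℝ} (hℓ : 0 < ℓ) (g : ℝ) :
    Q1D n ℓ g (psiF n ℓ) = (π/ℓ)^2 * ∑ k ∈ Finset.range n, ((k:ℝ))^2 := by
  unfold Q1D
  have hinter : ∀ (i : Fin n), ∀ j ∈ Finset.Ioi i,
      ℓ⁻¹ * ∫ z in box n ℓ, (psiF n ℓ (Function.update z j (z i)))^2 = 0 := by
    intro i j hj
    have hij : i ≠ j := ne_of_lt (Finset.mem_Ioi.mp hj)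
    have hv : ∀ z : Fin n → ℝ, psiF n ℓ (Function.update z j (z i)) = 0 := by
      intro z
      apply psiF_diag _ hij
      rw [Function.update_of_ne hij, Function.update_self]
    simp [hv]
  rw [Finset.sum_congr rfl (fun i _ => Finset.sum_congr rfl (hinter i))]
  simp only [Finset.sum_const_zero, mul_zero, add_zero]
  rw [Finset.sum_congr rfl fun j _ => kinetic_psiF hℓ j, ← Finset.mul_sum, Finset.sum_comm]
  have hσ : ∀ σ : Equiv.Perm (Fin n), ∑ j : Fin n, ((((σ j : ℕ)):ℝ)*π/ℓ)^2
      = ∑ k ∈ Finset.range n, ((k:ℝ)*π/ℓ)^2 := by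
    intro σ
    rw [Equiv.sum_comp σ (fun k : Fin n => ((((k : ℕ)):ℝ)*π/ℓ)^2)]
    exact Fin.sum_univ_eq_sum_range (fun k => ((k:ℝ)*π/ℓ)^2) n
  rw [Finset.sum_congr rfl fun σ _ => hσ σ]
  rw [Finset.sum_const, Finset.card_univ, Fintype.card_perm, Fintype.card_fin, nsmul_eq_mul,
    ← mul_assoc, inv_mul_cancel₀ (by positivity : ((Nat.factorial n : ℝ)) ≠ 0), one_mul,
    Finset.mul_sum]
  exact Finset.sum_congr rfl fun k _ => by ring

def psiC (n : ℕ) (ℓ : ℝ) : (Fin n → ℝ) → ℝ := fun _ => (Real.sqrt (ℓ^n))⁻¹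

lemma norm_psiC {n : ℕ} {ℓ : ℝ} (hℓ : 0 < ℓ) :
    ∫ z in box n ℓ, (psiC n ℓ z)^2 = 1 := by
  simp only [psiC]
  rw [MeasureTheory.setIntegral_const]
  have hvol : volume (box n ℓ) = ENNReal.ofReal ℓ ^ n := by
    rw [box, volume_pi, Measure.pi_pi]
    simp [Real.volume_Icc]
  rw [measureReal_def, hvol, smul_eq_mul]
  rw [ENNReal.toReal_pow, ENNReal.toReal_ofReal hℓ.le, inv_pow,
    Real.sq_sqrt (by positivity), mul_inv_cancel₀ (by positivity)]

lemma adm_psiC {n : ℕ} {ℓ : ℝ} (hℓ : 0 < ℓ) : adm1D n ℓ (psiC n ℓ) :=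
  ⟨contDiff_const, norm_psiC hℓ⟩

lemma Q1D_psiC {n : ℕ} {ℓ : ℝ} (hℓ : 0 < ℓ) (g : ℝ) :
    Q1D n ℓ g (psiC n ℓ) = g * ((n:ℝ)*((n:ℝ)-1)/2) * ℓ⁻¹ := by
  unfold Q1D
  have h1 : ∀ (j : Fin n) (z : Fin n → ℝ),
      deriv (fun t => psiC n ℓ (Function.update z j t)) (z j) = 0 := by
    intro j z; simp [psiC]
  simp only [h1]
  have h2 : ∀ (i j : Fin n),
      (∫ z in box n ℓ, (psiC n ℓ (Function.update z j (z i)))^2) = 1 :=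
    fun i j => norm_psiC hℓ
  simp only [h2, mul_one]
  rw [Finset.sum_congr rfl (fun (i : Fin n) _ => Finset.sum_const (ℓ⁻¹))]
  simp only [nsmul_eq_mul]
  rw [← Finset.sum_mul, pair_count]
  simp
  ring

end LLaux

/-- Upper bounds for the Neumann Lieb-Liniger energy:
`E_N^{1D}(n,ℓ,g) ≤ g n(n−1)/(2ℓ)` and `E_N^{1D}(n,ℓ,g) ≤ (π²/3) n³/ℓ²`. -/
theorem stmt18 (n : ℕ) (hn : 1 ≤ n) (ℓ g : ℝ) (hℓ : 0 < ℓ) (hg : 0 ≤ g) :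
    E1DN n ℓ g ≤ g * (n : ℝ) * ((n : ℝ) - 1) / (2 * ℓ) ∧
    E1DN n ℓ g ≤ (Real.pi ^ 2 / 3) * (n : ℝ) ^ 3 / ℓ ^ 2 := by
  classical
  have hbdd : BddBelow {E | ∃ ψ, adm1D n ℓ ψ ∧ Q1D n ℓ g ψ = E} := by
    refine ⟨0, fun E hE => ?_⟩
    obtain ⟨ψ, _, rfl⟩ := hE
    unfold Q1D
    have t1 : 0 ≤ ∑ j : Fin n, ∫ z in box n ℓ,
        (deriv (fun t => ψ (Function.update z j t)) (z j))^2 :=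
      Finset.sum_nonneg fun j _ => MeasureTheory.integral_nonneg fun z => sq_nonneg _
    have t2 : (0:ℝ) ≤ ∑ i : Fin n, ∑ j ∈ Finset.Ioi i,
        ℓ⁻¹ * ∫ z in box n ℓ, (ψ (Function.update z j (z i)))^2 :=
      Finset.sum_nonneg fun i _ => Finset.sum_nonneg fun j _ =>
        mul_nonneg (inv_nonneg.mpr hℓ.le) (MeasureTheory.integral_nonneg fun z => sq_nonneg _)
    nlinarith [mul_nonneg hg t2]
  have hle : ∀ ψ, adm1D n ℓ ψ → E1DN n ℓ g ≤ Q1D n ℓ g ψ :=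
    fun ψ h => csInf_le hbdd ⟨ψ, h, rfl⟩
  have hℓ' : ℓ ≠ 0 := hℓ.ne'
  constructor
  · refine le_trans (hle _ (LLaux.adm_psiC hℓ)) ?_
    rw [LLaux.Q1D_psiC hℓ g]
    apply le_of_eq
    field_simp
  · refine le_trans (hle _ (LLaux.adm_psiF hℓ)) ?_
    rw [LLaux.Q1D_psiF hℓ g, LLaux.sq_sum]
    have hn1 : (1:ℝ) ≤ (n:ℝ) := by exact_mod_cast hn
    have key : (n:ℝ)*((n:ℝ)-1)*(2*(n:ℝ)-1)/6 ≤ (n:ℝ)^3/3 := by nlinarith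
    calc (π/ℓ)^2 * ((n:ℝ)*((n:ℝ)-1)*(2*(n:ℝ)-1)/6)
        ≤ (π/ℓ)^2 * ((n:ℝ)^3/3) := mul_le_mul_of_nonneg_left key (by positivity)
      _ = Real.pi^2/3*(n:ℝ)^3/ℓ^2 := by rw [div_pow]; ring
end
end

section
/- Fix s > 0. There is a unique μ > 0 such that ∫_ℝ max{μ − |z|^s, 0} dz = 1. With this μ, the function ρ^{TF}(z) = max{μ − |z|^s, 0} minimizes the Thomas–Fermi functional 𝓔^{TF}[ρ] = ∫_ℝ(|z|^s ρ(z) + ρ(z)²/2) dz among all measurable ρ : ℝ → [0,∞) with ∫ρ = 1 and ∫ρ² < ∞, and it is the unique minimizer up to equality almost everywhere. -/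
open MeasureTheory Real Set
open scoped ENNReal

lemma tf_cont (s : ℝ) (hs : 0 < s) (μ : ℝ) :
    Continuous fun z : ℝ => max (μ - |z| ^ s) 0 :=
  (continuous_const.sub (continuous_abs.rpow_const fun _ => Or.inr hs.le)).max continuous_const

lemma tf_supp (s : ℝ) (hs : 0 < s) {μ : ℝ} (hμ : 0 < μ) :
    ∀ z : ℝ, z ∉ Icc (-(μ ^ s⁻¹)) (μ ^ s⁻¹) → max (μ - |z| ^ s) 0 = 0 := by
  intro z hz
  have hz' : μ ^ s⁻¹ < |z| := by
    simp only [mem_Icc, not_and_or, not_le] at hz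
    rcases hz with h | h
    · calc μ ^ s⁻¹ < -z := by linarith
        _ ≤ |z| := neg_le_abs z
    · exact h.trans_le (le_abs_self z)
  have hle : μ ≤ |z| ^ s := by
    have h2 := Real.rpow_lt_rpow (Real.rpow_nonneg hμ.le _) hz' hs
    rw [Real.rpow_inv_rpow hμ.le hs.ne'] at h2; exact h2.le
  exact max_eq_right (by linarith)

lemma tf_hcs (s : ℝ) (hs : 0 < s) {μ : ℝ} (hμ : 0 < μ) :
    HasCompactSupport fun z : ℝ => max (μ - |z| ^ s) 0 :=
  HasCompactSupport.intro isCompact_Icc (tf_supp s hs hμ)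

lemma tf_integrable (s : ℝ) (hs : 0 < s) {μ : ℝ} (hμ : 0 < μ) :
    Integrable (fun z : ℝ => max (μ - |z| ^ s) 0) :=
  (tf_cont s hs μ).integrable_of_hasCompactSupport (tf_hcs s hs hμ)

lemma tf_scale (s : ℝ) (hs : 0 < s) {μ : ℝ} (hμ : 0 < μ) :
    (∫ z : ℝ, max (μ - |z| ^ s) 0) =
      μ ^ (1 + s⁻¹) * ∫ z : ℝ, max (1 - |z| ^ s) 0 := by
  set a := μ ^ s⁻¹ with ha
  have ha0 : 0 < a := Real.rpow_pos_of_pos hμ _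
  have has : a ^ s = μ := Real.rpow_inv_rpow hμ.le hs.ne'
  have key : ∀ x : ℝ, max (μ - |a * x| ^ s) 0 = μ * max (1 - |x| ^ s) 0 := by
    intro x
    rw [abs_mul, abs_of_pos ha0, Real.mul_rpow ha0.le (abs_nonneg x), has]
    rw [mul_max_of_nonneg _ _ hμ.le, mul_zero, mul_sub, mul_one]
  have h1 : (∫ x : ℝ, max (μ - |a * x| ^ s) 0) = |a⁻¹| • ∫ z : ℝ, max (μ - |z| ^ s) 0 :=
    Measure.integral_comp_mul_left (fun z => max (μ - |z| ^ s) 0) a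
  simp only [key] at h1
  rw [integral_const_mul] at h1
  rw [abs_of_pos (inv_pos.mpr ha0), smul_eq_mul] at h1
  have : (∫ z : ℝ, max (μ - |z| ^ s) 0) = a * (μ * ∫ x : ℝ, max (1 - |x| ^ s) 0) := by
    field_simp at h1 ⊢
    linarith [h1]
  rw [this, ← mul_assoc, Real.rpow_add hμ, Real.rpow_one, ha, mul_comm (μ ^ s⁻¹) μ]

lemma tf_pos (s : ℝ) (hs : 0 < s) : 0 < ∫ z : ℝ, max (1 - |z| ^ s) 0 := by
  refine (integral_pos_iff_support_of_nonneg (fun z => le_max_right _ _)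
    (tf_integrable s hs one_pos)).mpr ?_
  have hsub : Ioo (-1 : ℝ) 1 ⊆ Function.support fun z : ℝ => max (1 - |z| ^ s) 0 := by
    intro z hz
    have habs : |z| < 1 := abs_lt.mpr ⟨hz.1, hz.2⟩
    have : |z| ^ s < 1 := Real.rpow_lt_one (abs_nonneg z) habs hs
    simp only [Function.mem_support]
    have : 0 < max (1 - |z| ^ s) 0 := lt_max_of_lt_left (by linarith)
    exact this.ne'
  calc (0 : ℝ≥0∞) < volume (Ioo (-1 : ℝ) 1) := by simp [Real.volume_Ioo]
    _ ≤ _ := measure_mono hsub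

/-- The explicit Thomas–Fermi minimizer: there is a unique `μ > 0` with
`∫ [μ − |z|^s]₊ dz = 1`, and for this `μ` the function `ρ^{TF}(z) = [μ − |z|^s]₊`
minimizes `∫ (|z|^s ρ + ρ²/2)` among all measurable `ρ ≥ 0` with `∫ ρ = 1` and
`∫ ρ² < ∞`, uniquely up to equality a.e. -/
theorem stmt19 (s : ℝ) (hs : 0 < s) :
    (∃! μ : ℝ, 0 < μ ∧ (∫ z : ℝ, max (μ - |z| ^ s) 0) = 1) ∧
    ∀ μ : ℝ, 0 < μ → (∫ z : ℝ, max (μ - |z| ^ s) 0) = 1 →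
      ∀ ρ : ℝ → ℝ, Measurable ρ → (∀ z, 0 ≤ ρ z) →
        (∫⁻ z : ℝ, ENNReal.ofReal (ρ z)) = 1 →
        (∫⁻ z : ℝ, ENNReal.ofReal ((ρ z) ^ 2)) ≠ ⊤ →
        (∫⁻ z : ℝ, ENNReal.ofReal
            (|z| ^ s * max (μ - |z| ^ s) 0 + (max (μ - |z| ^ s) 0) ^ 2 / 2)) ≤
          (∫⁻ z : ℝ, ENNReal.ofReal (|z| ^ s * ρ z + (ρ z) ^ 2 / 2)) ∧
        ((∫⁻ z : ℝ, ENNReal.ofReal (|z| ^ s * ρ z + (ρ z) ^ 2 / 2)) =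
            (∫⁻ z : ℝ, ENNReal.ofReal
              (|z| ^ s * max (μ - |z| ^ s) 0 + (max (μ - |z| ^ s) 0) ^ 2 / 2)) →
          ρ =ᵐ[volume] fun z => max (μ - |z| ^ s) 0) := by
  set c := ∫ z : ℝ, max (1 - |z| ^ s) 0 with hc
  have hc0 : 0 < c := tf_pos s hs
  set t := 1 + s⁻¹ with ht
  have ht0 : 0 < t := by positivity
  constructor
  · -- existence and uniqueness of μ
    refine ⟨c ^ (-t⁻¹), ⟨Real.rpow_pos_of_pos hc0 _, ?_⟩, ?_⟩
    · rw [tf_scale s hs (Real.rpow_pos_of_pos hc0 _), ← ht,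
        ← Real.rpow_mul hc0.le, neg_mul, inv_mul_cancel₀ ht0.ne',
        Real.rpow_neg_one]
      exact inv_mul_cancel₀ hc0.ne'
    · rintro μ ⟨hμ0, hμ1⟩
      have h2 : μ ^ t * c = 1 := by rw [← tf_scale s hs hμ0]; exact hμ1
      have h3 : μ ^ t = c⁻¹ := by field_simp at h2 ⊢; linarith
      have := congrArg (fun x : ℝ => x ^ t⁻¹) h3
      rw [Real.rpow_rpow_inv hμ0.le ht0.ne'] at this
      rw [this, ← Real.rpow_neg_one, ← Real.rpow_mul hc0.le]
      congr 1; ring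
  · -- minimization
    intro μ hμ0 hμ1 ρ hρm hρ0 hρ1 _hρ2
    set b : ℝ → ℝ := fun z => max (μ - |z| ^ s) 0 with hb
    have hb0 : ∀ z, 0 ≤ b z := fun z => le_max_right _ _
    have hbc : Continuous b := tf_cont s hs μ
    have hbm : Measurable b := hbc.measurable
    have hbint : Integrable b := tf_integrable s hs hμ0
    have hbL1 : (∫⁻ z : ℝ, ENNReal.ofReal (b z)) = 1 := by
      rw [← ofReal_integral_eq_lintegral_ofReal hbint (Filter.Eventually.of_forall hb0),
        hμ1, ENNReal.ofReal_one]
    -- pointwise identity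
    have key : ∀ z : ℝ,
        (|z| ^ s * ρ z + (ρ z) ^ 2 / 2) + μ * b z =
        (|z| ^ s * b z + (b z) ^ 2 / 2) + ((ρ z - b z) ^ 2 / 2 + max (|z| ^ s) μ * ρ z) := by
      intro z
      have hvb : |z| ^ s + b z = max (|z| ^ s) μ := by
        rcases le_or_gt μ (|z| ^ s) with h | h
        · rw [hb]; simp only [max_eq_right (by linarith : μ - |z| ^ s ≤ 0),
            max_eq_left h, add_zero]
        · rw [hb]; simp only [max_eq_left (by linarith : (0:ℝ) ≤ μ - |z| ^ s),
            max_eq_right h.le]; ring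
      have hmb : max (|z| ^ s) μ * b z = μ * b z := by
        rcases le_or_gt μ (|z| ^ s) with h | h
        · have : b z = 0 := by rw [hb]; exact max_eq_right (by linarith)
          rw [this, mul_zero, mul_zero]
        · rw [max_eq_right h.le]
      have expand : (|z| ^ s * ρ z + (ρ z) ^ 2 / 2) =
          (|z| ^ s * b z + (b z) ^ 2 / 2) + (ρ z - b z) ^ 2 / 2
            + (|z| ^ s + b z) * (ρ z - b z) := by ring
      rw [expand, hvb]
      have : max (|z| ^ s) μ * (ρ z - b z)
          = max (|z| ^ s) μ * ρ z - μ * b z := by rw [mul_sub, hmb]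
      rw [this]; ring
    -- nonnegativity facts
    have hA0 : ∀ z : ℝ, 0 ≤ |z| ^ s * ρ z + (ρ z) ^ 2 / 2 := fun z => by
      have := Real.rpow_nonneg (abs_nonneg z) s
      have := hρ0 z; positivity
    have hB0 : ∀ z : ℝ, 0 ≤ |z| ^ s * b z + (b z) ^ 2 / 2 := fun z => by
      have := Real.rpow_nonneg (abs_nonneg z) s
      have := hb0 z; positivity
    have hE0 : ∀ z : ℝ, 0 ≤ max (|z| ^ s) μ * ρ z := fun z =>
      mul_nonneg (le_max_of_le_right hμ0.le) (hρ0 z)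
    -- measurability
    have hVm : Measurable fun z : ℝ => |z| ^ s :=
      (continuous_abs.rpow_const fun _ => Or.inr hs.le).measurable
    have hAm : Measurable fun z : ℝ => |z| ^ s * ρ z + (ρ z) ^ 2 / 2 :=
      ((hVm.mul hρm).add ((hρm.pow_const 2).div_const 2))
    have hBm : Measurable fun z : ℝ => |z| ^ s * b z + (b z) ^ 2 / 2 :=
      ((hVm.mul hbm).add ((hbm.pow_const 2).div_const 2))
    have hDm : Measurable fun z : ℝ => (ρ z - b z) ^ 2 / 2 :=
      ((hρm.sub hbm).pow_const 2).div_const 2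
    have hEm : Measurable fun z : ℝ => max (|z| ^ s) μ * ρ z :=
      (hVm.max measurable_const).mul hρm
    set IA := ∫⁻ z : ℝ, ENNReal.ofReal (|z| ^ s * ρ z + (ρ z) ^ 2 / 2) with hIA
    set IB := ∫⁻ z : ℝ, ENNReal.ofReal (|z| ^ s * b z + (b z) ^ 2 / 2) with hIB
    set ID := ∫⁻ z : ℝ, ENNReal.ofReal ((ρ z - b z) ^ 2 / 2) with hID
    set IE := ∫⁻ z : ℝ, ENNReal.ofReal (max (|z| ^ s) μ * ρ z) with hIE
    set C : ℝ≥0∞ := ENNReal.ofReal μ with hC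
    have hCtop : C ≠ ⊤ := ENNReal.ofReal_ne_top
    -- ∫ μ b = C
    have hmub : (∫⁻ z : ℝ, ENNReal.ofReal (μ * b z)) = C := by
      have : ∀ z : ℝ, ENNReal.ofReal (μ * b z) = C * ENNReal.ofReal (b z) := fun z =>
        ENNReal.ofReal_mul hμ0.le
      simp only [this]
      rw [lintegral_const_mul C (hbm.ennreal_ofReal), hbL1, mul_one]
    -- the main identity at the level of integrals
    have h1 : IA + C = IB + (ID + IE) := by
      rw [← hmub, hIA, ← lintegral_add_right _ (g := fun z => ENNReal.ofReal (μ * b z)) ((measurable_const.mul hbm).ennreal_ofReal)]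
      rw [hIB, hID, hIE, ← lintegral_add_right _ (hEm.ennreal_ofReal),
        ← lintegral_add_right _ (g := fun z => ENNReal.ofReal ((ρ z - b z) ^ 2 / 2) + ENNReal.ofReal (max (|z| ^ s) μ * ρ z)) (hDm.ennreal_ofReal.add hEm.ennreal_ofReal)]
      congr 1; funext z
      rw [← ENNReal.ofReal_add (hA0 z) (mul_nonneg hμ0.le (hb0 z)), key z,
        ENNReal.ofReal_add (hB0 z) (by have := sq_nonneg (ρ z - b z); have := hE0 z; positivity),
        ENNReal.ofReal_add (by positivity) (hE0 z)]
    -- E ≥ C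
    have hE : C ≤ IE := by
      have hmono : (∫⁻ z : ℝ, ENNReal.ofReal (μ * ρ z)) ≤ IE := by
        refine lintegral_mono fun z => ENNReal.ofReal_le_ofReal ?_
        exact mul_le_mul_of_nonneg_right (le_max_right _ _) (hρ0 z)
      have : (∫⁻ z : ℝ, ENNReal.ofReal (μ * ρ z)) = C := by
        have : ∀ z : ℝ, ENNReal.ofReal (μ * ρ z) = C * ENNReal.ofReal (ρ z) := fun z =>
          ENNReal.ofReal_mul hμ0.le
        simp only [this]
        rw [lintegral_const_mul C (hρm.ennreal_ofReal), hρ1, mul_one]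
      rwa [this] at hmono
    have hmain : IB ≤ IA := by
      have h2 : IB + C ≤ IA + C := by
        rw [h1]
        exact add_le_add_right (le_trans hE le_add_self) IB
      exact (ENNReal.add_le_add_iff_right hCtop).mp h2
    refine ⟨hmain, ?_⟩
    -- equality case
    intro heq
    have hBtop : IB ≠ ⊤ := by
      have hint : Integrable (fun z : ℝ => |z| ^ s * b z + (b z) ^ 2 / 2) := by
        apply Continuous.integrable_of_hasCompactSupport
        · exact ((continuous_abs.rpow_const fun _ => Or.inr hs.le).mul hbc).add
            ((hbc.pow 2).div_const 2)
        · apply HasCompactSupport.intro isCompact_Icc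
          intro z hz
          have hbz : b z = 0 := tf_supp s hs hμ0 z hz
          simp [hbz]
      rw [hIB, ← ofReal_integral_eq_lintegral_ofReal hint
        (Filter.Eventually.of_forall hB0)]
      exact ENNReal.ofReal_ne_top
    have hAtop : IA ≠ ⊤ := by rw [heq]; exact hBtop
    have h3 : C = ID + IE := by
      rw [heq] at h1
      exact (ENNReal.add_right_inj hBtop).mp h1
    have hIEtop : IE ≠ ⊤ := by
      intro h
      rw [h3, h, add_top] at hCtop
      exact hCtop rfl
    have hID0 : ID = 0 := by
      have h4 : ID + IE ≤ 0 + IE := by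
        rw [zero_add, ← h3]; exact hE
      exact le_zero_iff.mp ((ENNReal.add_le_add_iff_right hIEtop).mp h4)
    have : ∀ᵐ z : ℝ ∂volume, ENNReal.ofReal ((ρ z - b z) ^ 2 / 2) = 0 :=
      (lintegral_eq_zero_iff hDm.ennreal_ofReal).mp hID0
    filter_upwards [this] with z hz
    have : (ρ z - b z) ^ 2 / 2 ≤ 0 := by
      by_contra hpos
      push_neg at hpos
      exact absurd hz (by simp [ENNReal.ofReal_eq_zero, not_le, hpos])
    have h4 : (ρ z - b z) ^ 2 = 0 := le_antisymm (by linarith) (sq_nonneg _)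
    have := pow_eq_zero_iff (n := 2) (by norm_num) |>.mp h4
    simpa [hb, sub_eq_zero] using this
end
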